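/- arXiv:2603.26217 — 4 statements merged into one kernel-verified Lean document; each statement's English description precedes it below -/
import Mathlib

section
/- Let x_1,…,x_d be i.i.d. Bernoulli(p) random variables, let n ≥ 2 with n−1 ≤ d, and set k = ⌊d/(n−1)⌋. Then for every T ∈ ℝ, the U-statistic U_d(h) = C(d,n−1)^{-1} Σ_{1 ≤ i_1 < ⋯ < i_{n-1} ≤ d} x_{i_1} ⋯ x_{i_{n-1}} satisfies E[ exp( T · U_d(h) ) ] ≤ ( 1 − p^{n-1} + p^{n-1} e^{T/k} )^k. -/
open MeasureTheory ProbabilityTheory Filter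

lemma exists_perm_image_eq {α : Type*} [Fintype α] [DecidableEq α] {s t : Finset α}
    (h : s.card = t.card) : ∃ σ : Equiv.Perm α, s.image σ = t := by
  refine ⟨(Finset.equivOfCardEq h).extendSubtype, ?_⟩
  apply Finset.eq_of_subset_of_card_le
  · intro y hy
    obtain ⟨a, ha, rfl⟩ := Finset.mem_image.mp hy
    exact (Finset.equivOfCardEq h).extendSubtype_mem a ha
  · rw [Finset.card_image_of_injective _ (Equiv.injective _), h]

lemma sum_perm_prod {α : Type*} [Fintype α] [DecidableEq α] (v : α → ℝ) {m : ℕ} {B : Finset α}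
    (hB : B.card = m) :
    ((Fintype.card α).choose m : ℝ) * ∑ σ : Equiv.Perm α, ∏ i ∈ B, v (σ i)
      = (Fintype.card (Equiv.Perm α) : ℝ) *
          ∑ s ∈ Finset.powersetCard m (Finset.univ : Finset α), ∏ i ∈ s, v i := by
  set Pm := Finset.powersetCard m (Finset.univ : Finset α) with hPm
  have hconst : ∀ t ∈ Pm, (∑ σ : Equiv.Perm α, ∏ i ∈ t, v (σ i))
      = ∑ σ : Equiv.Perm α, ∏ i ∈ B, v (σ i) := by
    intro t ht
    have hcard : B.card = t.card := by
      rw [hB, (Finset.mem_powersetCard.mp ht).2]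
    obtain ⟨τ, hτ⟩ := exists_perm_image_eq hcard
    calc ∑ σ : Equiv.Perm α, ∏ i ∈ t, v (σ i)
        = ∑ σ : Equiv.Perm α, ∏ i ∈ B, v (σ (τ i)) := by
          refine Finset.sum_congr rfl fun σ _ => ?_
          rw [← hτ]
          exact (Finset.prod_image fun a _ b _ hab => τ.injective hab)
      _ = ∑ σ : Equiv.Perm α, ∏ i ∈ B, v (σ i) := by
          have := Equiv.sum_comp (Equiv.mulRight τ)
            (fun ρ : Equiv.Perm α => ∏ i ∈ B, v (ρ i))
          simpa [Equiv.Perm.mul_apply] using this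
  have hswap : ∑ t ∈ Pm, ∑ σ : Equiv.Perm α, ∏ i ∈ t, v (σ i)
      = (Fintype.card (Equiv.Perm α) : ℝ) * ∑ s ∈ Pm, ∏ i ∈ s, v i := by
    rw [Finset.sum_comm]
    have hinner : ∀ σ : Equiv.Perm α, ∑ t ∈ Pm, ∏ i ∈ t, v (σ i) = ∑ t ∈ Pm, ∏ i ∈ t, v i := by
      intro σ
      refine Finset.sum_nbij' (fun t => t.image σ) (fun t => t.image σ.symm) ?_ ?_ ?_ ?_ ?_
      · intro a ha
        simp only [hPm, Finset.mem_powersetCard] at ha ⊢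
        exact ⟨Finset.subset_univ _, by rw [Finset.card_image_of_injective _ σ.injective, ha.2]⟩
      · intro a ha
        simp only [hPm, Finset.mem_powersetCard] at ha ⊢
        exact ⟨Finset.subset_univ _, by rw [Finset.card_image_of_injective _ σ.symm.injective, ha.2]⟩
      · intro a _; simp [Finset.image_image]
      · intro a _; simp [Finset.image_image]
      · intro a _
        exact (Finset.prod_image fun i _ j _ hij => σ.injective hij).symm
    rw [Finset.sum_congr rfl fun σ _ => hinner σ, Finset.sum_const, Finset.card_univ,
      nsmul_eq_mul]
  have hcardPm : Pm.card = (Fintype.card α).choose m := by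
    simp [hPm, Finset.card_powersetCard]
  calc ((Fintype.card α).choose m : ℝ) * ∑ σ : Equiv.Perm α, ∏ i ∈ B, v (σ i)
      = ∑ _t ∈ Pm, ∑ σ : Equiv.Perm α, ∏ i ∈ B, v (σ i) := by
        rw [Finset.sum_const, nsmul_eq_mul, hcardPm]
    _ = ∑ t ∈ Pm, ∑ σ : Equiv.Perm α, ∏ i ∈ t, v (σ i) := (Finset.sum_congr rfl hconst).symm
    _ = (Fintype.card (Equiv.Perm α) : ℝ) * ∑ s ∈ Pm, ∏ i ∈ s, v i := hswap

/-- **Hoeffding's moment-generating-function bound for the product-kernel U-statistic.**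
Let `x₁, …, x_d` be i.i.d. Bernoulli(p) random variables, `n ≥ 2` with `n − 1 ≤ d`, and
`k = ⌊d/(n−1)⌋`.  Then for every `T ∈ ℝ`, the U-statistic
`U_d(h) = C(d, n−1)⁻¹ ∑_{1 ≤ i₁ < ⋯ < i_{n-1} ≤ d} x_{i₁} ⋯ x_{i_{n-1}}` satisfies
`E[exp(T U_d(h))] ≤ (1 − p^{n-1} + p^{n-1} e^{T/k})^k`. -/
theorem ustatistic_mgf_bound
    (d n : ℕ) (hn : 2 ≤ n) (hd : n - 1 ≤ d)
    (p : ℝ) (hp0 : 0 ≤ p) (hp1 : p ≤ 1)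
    (Ω : Type*) [MeasurableSpace Ω] (P : Measure Ω) [IsProbabilityMeasure P]
    (x : Fin d → Ω → ℕ)
    (hmeas : ∀ i, Measurable (x i))
    (h01 : ∀ i ω, x i ω ≤ 1)
    (hindep : iIndepFun (m := fun _ => ⊤) x P)
    (hber : ∀ i, P {ω | x i ω = 1} = ENNReal.ofReal p)
    (T : ℝ) :
    (∫ ω, Real.exp (T * ((d.choose (n - 1) : ℝ)⁻¹ *
        ∑ s ∈ Finset.powersetCard (n - 1) (Finset.univ : Finset (Fin d)),
          ∏ i ∈ s, (x i ω : ℝ))) ∂P)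
      ≤ (1 - p ^ (n - 1) + p ^ (n - 1) * Real.exp (T / ((d / (n - 1) : ℕ) : ℝ)))
          ^ (d / (n - 1) : ℕ) := by
  classical
  set m := n - 1 with hm_def
  have hm1 : 1 ≤ m := by omega
  set k := d / m with hk_def
  have hk1 : 1 ≤ k := (Nat.one_le_div_iff (by omega)).mpr hd
  have hkm : k * m ≤ d := Nat.div_mul_le_self d m
  -- blocks
  have hblock : ∀ (j : ℕ), ∀ y ∈ Finset.Ico (j*m) (min (j*m+m) d), y < d :=
    fun j y hy => lt_of_lt_of_le (Finset.mem_Ico.mp hy).2 (min_le_right _ _)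
  set A : ℕ → Finset (Fin d) := fun j => (Finset.Ico (j*m) (min (j*m+m) d)).attachFin (hblock j)
    with hA_def
  have hAmem : ∀ (j : ℕ) (i : Fin d), i ∈ A j ↔ j*m ≤ i.val ∧ i.val < j*m+m := by
    intro j i
    rw [hA_def]
    simp only [Finset.mem_attachFin, Finset.mem_Ico, lt_min_iff]
    exact ⟨fun h => ⟨h.1, h.2.1⟩, fun h => ⟨h.1, h.2, i.isLt⟩⟩
  have hAcard : ∀ j < k, (A j).card = m := by
    intro j hj
    have hle : j*m + m ≤ d := by
      calc j*m+m = (j+1)*m := by ring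
        _ ≤ k*m := Nat.mul_le_mul_right m hj
        _ ≤ d := hkm
    rw [hA_def]
    simp only [Finset.card_attachFin, Nat.card_Ico]
    omega
  have hAdisj : ∀ j1 j2 : ℕ, j1 ≠ j2 → Disjoint (A j1) (A j2) := by
    intro j1 j2 hne
    rw [Finset.disjoint_left]
    intro i h1 h2
    rw [hAmem] at h1 h2
    rcases Nat.lt_or_ge j1 j2 with hlt | hge
    · have : j1*m + m ≤ j2*m := by
        calc j1*m+m = (j1+1)*m := by ring
          _ ≤ j2*m := Nat.mul_le_mul_right m hlt
      omega
    · have hlt : j2 < j1 := by omega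
      have : j2*m + m ≤ j1*m := by
        calc j2*m+m = (j2+1)*m := by ring
          _ ≤ j1*m := Nat.mul_le_mul_right m hlt
      omega
  set N := Fintype.card (Equiv.Perm (Fin d)) with hN_def
  have hNpos : 0 < N := Fintype.card_pos
  set C := d.choose m with hC_def
  have hCpos : 0 < C := Nat.choose_pos hd
  set Pm := Finset.powersetCard m (Finset.univ : Finset (Fin d)) with hPm_def
  set V : Ω → Fin d → ℝ := fun ω i => (x i ω : ℝ) with hV_def
  set U : Ω → ℝ := fun ω => (C:ℝ)⁻¹ * ∑ s ∈ Pm, ∏ i ∈ s, V ω i with hU_def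
  set Z : ℕ → Equiv.Perm (Fin d) → Ω → ℝ := fun j σ ω => ∏ i ∈ A j, V ω (σ i) with hZ_def
  set W : Equiv.Perm (Fin d) → Ω → ℝ :=
    fun σ ω => (k:ℝ)⁻¹ * ∑ j ∈ Finset.range k, Z j σ ω with hW_def
  -- basic bounds
  have hV01 : ∀ ω i, V ω i = 0 ∨ V ω i = 1 := by
    intro ω i
    rcases Nat.le_one_iff_eq_zero_or_eq_one.mp (h01 i ω) with h | h <;> simp [hV_def, h]
  have hVnn : ∀ ω i, 0 ≤ V ω i := fun ω i => Nat.cast_nonneg _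
  have hVle : ∀ ω i, V ω i ≤ 1 := by
    intro ω i
    rcases hV01 ω i with h | h <;> simp [h]
  have hprodnn : ∀ (ω) (u : Finset (Fin d)) (g : Fin d → Fin d), 0 ≤ ∏ i ∈ u, V ω (g i) :=
    fun ω u g => Finset.prod_nonneg fun i _ => hVnn ω (g i)
  have hprodle : ∀ (ω) (u : Finset (Fin d)) (g : Fin d → Fin d), ∏ i ∈ u, V ω (g i) ≤ 1 :=
    fun ω u g => Finset.prod_le_one (fun i _ => hVnn ω (g i)) (fun i _ => hVle ω (g i))
  have hZ01 : ∀ j σ ω, Z j σ ω = 0 ∨ Z j σ ω = 1 := by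
    intro j σ ω
    by_cases hall : ∀ i ∈ A j, V ω (σ i) = 1
    · right; exact Finset.prod_eq_one hall
    · left
      push_neg at hall
      obtain ⟨i, hi, hne⟩ := hall
      exact Finset.prod_eq_zero hi ((hV01 ω (σ i)).resolve_right hne)
  have hkne : (k:ℝ) ≠ 0 := Nat.cast_ne_zero.mpr (by omega)
  have hNne : (N:ℝ) ≠ 0 := Nat.cast_ne_zero.mpr hNpos.ne'
  have hCne : (C:ℝ) ≠ 0 := Nat.cast_ne_zero.mpr hCpos.ne'
  -- Claim 1 : permutation average of block means equals the U-statistic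
  have claim1 : ∀ ω, (N:ℝ)⁻¹ * ∑ σ : Equiv.Perm (Fin d), W σ ω = U ω := by
    intro ω
    have hZsum : ∀ j ∈ Finset.range k, (∑ σ : Equiv.Perm (Fin d), Z j σ ω)
        = (N:ℝ) * U ω := by
      intro j hj
      have key := sum_perm_prod (V ω) (hAcard j (Finset.mem_range.mp hj))
      rw [Fintype.card_fin] at key
      rw [hU_def]
      simp only [hZ_def]
      rw [mul_comm ((C:ℝ)⁻¹) _, ← mul_assoc, ← key]
      field_simp
      rfl
    have h1 : ∑ σ : Equiv.Perm (Fin d), W σ ω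
        = (k:ℝ)⁻¹ * ∑ j ∈ Finset.range k, ∑ σ : Equiv.Perm (Fin d), Z j σ ω := by
      simp only [hW_def]
      rw [← Finset.mul_sum, Finset.sum_comm]
    rw [h1, Finset.sum_congr rfl hZsum, Finset.sum_const, Finset.card_range, nsmul_eq_mul]
    field_simp
  -- Claim 2 : Jensen
  have claim2 : ∀ ω, Real.exp (T * U ω)
      ≤ ∑ σ : Equiv.Perm (Fin d), (N:ℝ)⁻¹ * Real.exp (T * W σ ω) := by
    intro ω
    have hw1 : ∑ _σ : Equiv.Perm (Fin d), (N:ℝ)⁻¹ = 1 := by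
      rw [Finset.sum_const, Finset.card_univ, ← hN_def, nsmul_eq_mul]
      field_simp
    have harg : T * U ω = ∑ σ : Equiv.Perm (Fin d), (N:ℝ)⁻¹ • (T * W σ ω) := by
      simp only [smul_eq_mul]
      rw [← claim1 ω, Finset.mul_sum, Finset.mul_sum]
      exact Finset.sum_congr rfl fun σ _ => by ring
    calc Real.exp (T * U ω) = Real.exp (∑ σ : Equiv.Perm (Fin d), (N:ℝ)⁻¹ • (T * W σ ω)) := by
          rw [harg]
      _ ≤ ∑ σ : Equiv.Perm (Fin d), (N:ℝ)⁻¹ • Real.exp (T * W σ ω) :=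
          convexOn_exp.map_sum_le (fun σ _ => by positivity) hw1 (fun σ _ => Set.mem_univ _)
      _ = ∑ σ : Equiv.Perm (Fin d), (N:ℝ)⁻¹ * Real.exp (T * W σ ω) := by
          simp [smul_eq_mul]
  -- measurability
  have hVmeas : ∀ i, Measurable fun ω => V ω i := fun i => measurable_from_top.comp (hmeas i)
  have hUmeas : Measurable U := by
    apply Measurable.const_mul
    exact Finset.measurable_sum _ fun s _ => Finset.measurable_prod _ fun i _ => hVmeas i
  have hWmeas : ∀ σ, Measurable (W σ) := by
    intro σ
    apply Measurable.const_mul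
    exact Finset.measurable_sum _ fun j _ => Finset.measurable_prod _ fun i _ => hVmeas (σ i)
  -- expectation of a product of coordinates
  have L4 : ∀ u : Finset (Fin d), (∫ ω, ∏ i ∈ u, V ω i ∂P) = p ^ u.card := by
    intro u
    have hpre : ∀ i ∈ u, MeasurableSet[MeasurableSpace.comap (x i) ⊤] (x i ⁻¹' {1}) :=
      fun i _ => ⟨{1}, trivial, rfl⟩
    have hPE : P (⋂ i ∈ u, x i ⁻¹' {1}) = ENNReal.ofReal p ^ u.card := by
      rw [hindep.meas_biInter hpre]
      have hb : ∀ i ∈ u, P (x i ⁻¹' {1}) = ENNReal.ofReal p := fun i _ => hber i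
      rw [Finset.prod_congr rfl hb, Finset.prod_const]
    have hEmeas : MeasurableSet (⋂ i ∈ u, x i ⁻¹' {1}) :=
      MeasurableSet.biInter u.countable_toSet fun i _ => (hmeas i) trivial
    have hfun : (fun ω => ∏ i ∈ u, V ω i)
        = Set.indicator (⋂ i ∈ u, x i ⁻¹' {1}) (fun _ => (1:ℝ)) := by
      funext ω
      by_cases hω : ω ∈ ⋂ i ∈ u, x i ⁻¹' {1}
      · rw [Set.indicator_of_mem hω]
        refine Finset.prod_eq_one fun i hi => ?_
        have hx1 : x i ω = 1 := Set.mem_iInter₂.mp hω i hi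
        simp [hV_def, hx1]
      · rw [Set.indicator_of_notMem hω]
        have : ∃ i ∈ u, x i ω ≠ 1 := by
          by_contra hcon
          push_neg at hcon
          exact hω (Set.mem_iInter₂.mpr fun i hi => hcon i hi)
        obtain ⟨i, hi, hne⟩ := this
        have hx0 : x i ω = 0 := by have := h01 i ω; omega
        exact Finset.prod_eq_zero hi (by simp [hV_def, hx0])
      
    rw [hfun, integral_indicator_const (1:ℝ) hEmeas, measureReal_def, hPE]
    simp [ENNReal.toReal_pow, ENNReal.toReal_ofReal hp0]
  -- integrability helper
  have hbd_int : ∀ (f : Ω → ℝ) (Cb : ℝ), Measurable f → (∀ ω, ‖f ω‖ ≤ Cb) → Integrable f P :=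
    fun f Cb hf hb =>
      (integrable_const Cb).mono' hf.aestronglyMeasurable (MeasureTheory.ae_of_all _ hb)
  have hexp_bd : ∀ y : ℝ, 0 ≤ y → y ≤ 1 → ‖Real.exp (T * y)‖ ≤ Real.exp |T| := by
    intro y h0 h1
    rw [Real.norm_eq_abs, Real.abs_exp]
    apply Real.exp_le_exp.mpr
    calc T * y ≤ |T * y| := le_abs_self _
      _ = |T| * |y| := abs_mul _ _
      _ ≤ |T| * 1 := by
          apply mul_le_mul_of_nonneg_left _ (abs_nonneg T)
          rw [abs_of_nonneg h0]; exact h1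
      _ = |T| := mul_one _
  have hU01 : ∀ ω, 0 ≤ U ω ∧ U ω ≤ 1 := by
    intro ω
    have hPmcard : Pm.card = C := by
      rw [hPm_def, hC_def, Finset.card_powersetCard, Finset.card_univ, Fintype.card_fin]
    have hnn : 0 ≤ ∑ s ∈ Pm, ∏ i ∈ s, V ω i :=
      Finset.sum_nonneg fun s _ => Finset.prod_nonneg fun i _ => hVnn ω i
    have hle : ∑ s ∈ Pm, ∏ i ∈ s, V ω i ≤ (C:ℝ) := by
      calc ∑ s ∈ Pm, ∏ i ∈ s, V ω i ≤ ∑ _s ∈ Pm, (1:ℝ) :=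
            Finset.sum_le_sum fun s _ =>
              Finset.prod_le_one (fun i _ => hVnn ω i) (fun i _ => hVle ω i)
        _ = (C:ℝ) := by rw [Finset.sum_const, nsmul_eq_mul, mul_one, hPmcard]
    constructor
    · exact mul_nonneg (by positivity) hnn
    · calc (C:ℝ)⁻¹ * ∑ s ∈ Pm, ∏ i ∈ s, V ω i ≤ (C:ℝ)⁻¹ * (C:ℝ) := by
            apply mul_le_mul_of_nonneg_left hle (by positivity)
        _ = 1 := inv_mul_cancel₀ hCne
  have hW01 : ∀ σ ω, 0 ≤ W σ ω ∧ W σ ω ≤ 1 := by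
    intro σ ω
    have hnn : 0 ≤ ∑ j ∈ Finset.range k, Z j σ ω :=
      Finset.sum_nonneg fun j _ => hprodnn ω (A j) σ
    have hle : ∑ j ∈ Finset.range k, Z j σ ω ≤ (k:ℝ) := by
      calc ∑ j ∈ Finset.range k, Z j σ ω ≤ ∑ _j ∈ Finset.range k, (1:ℝ) :=
            Finset.sum_le_sum fun j _ => hprodle ω (A j) σ
        _ = (k:ℝ) := by rw [Finset.sum_const, Finset.card_range, nsmul_eq_mul, mul_one]
    constructor
    · exact mul_nonneg (by positivity) hnn
    · calc (k:ℝ)⁻¹ * ∑ j ∈ Finset.range k, Z j σ ω ≤ (k:ℝ)⁻¹ * (k:ℝ) := by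
            apply mul_le_mul_of_nonneg_left hle (by positivity)
        _ = 1 := inv_mul_cancel₀ hkne
  -- Claim 3 : expectation of the block-product mgf
  have claim3 : ∀ σ : Equiv.Perm (Fin d),
      (∫ ω, Real.exp (T * W σ ω) ∂P)
        = (1 - p^m + p^m * Real.exp (T / (k:ℝ)))^k := by
    intro σ
    set lam : ℝ := Real.exp (T / (k:ℝ)) - 1 with hlam
    have hpt : ∀ ω, Real.exp (T * W σ ω)
        = ∑ t ∈ (Finset.range k).powerset,
            lam ^ t.card * ∏ i ∈ (t.biUnion A).image σ, V ω i := by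
      intro ω
      have h1 : T * W σ ω = ∑ j ∈ Finset.range k, (T / (k:ℝ)) * Z j σ ω := by
        simp only [hW_def]
        rw [← Finset.mul_sum, div_eq_mul_inv]
        ring
      have h2 : ∀ j ∈ Finset.range k, Real.exp ((T/(k:ℝ)) * Z j σ ω)
          = lam * Z j σ ω + 1 := by
        intro j _
        rcases hZ01 j σ ω with h | h
        · rw [h]; simp
        · rw [h]; simp [hlam]
      have h3 : ∀ t ∈ (Finset.range k).powerset,
          (∏ j ∈ t, (lam * Z j σ ω)) * ∏ _j ∈ Finset.range k \ t, (1:ℝ)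
            = lam ^ t.card * ∏ i ∈ (t.biUnion A).image σ, V ω i := by
        intro t _
        rw [Finset.prod_const_one, mul_one, Finset.prod_mul_distrib, Finset.prod_const]
        congr 1
        have hdisj : (↑t : Set ℕ).PairwiseDisjoint A := fun a _ b _ hab => hAdisj a b hab
        rw [Finset.prod_image (fun a _ b _ hab => σ.injective hab),
            Finset.prod_biUnion hdisj]
      calc Real.exp (T * W σ ω)
          = ∏ j ∈ Finset.range k, Real.exp ((T/(k:ℝ)) * Z j σ ω) := by
            rw [h1, Real.exp_sum]
        _ = ∏ j ∈ Finset.range k, (lam * Z j σ ω + 1) := Finset.prod_congr rfl h2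
        _ = ∑ t ∈ (Finset.range k).powerset,
              (∏ j ∈ t, (lam * Z j σ ω)) * ∏ _j ∈ Finset.range k \ t, (1:ℝ) :=
            Finset.prod_add _ _ _
        _ = ∑ t ∈ (Finset.range k).powerset,
              lam ^ t.card * ∏ i ∈ (t.biUnion A).image σ, V ω i :=
            Finset.sum_congr rfl h3
    have hcard_u : ∀ t ∈ (Finset.range k).powerset,
        ((t.biUnion A).image σ).card = m * t.card := by
      intro t ht
      rw [Finset.card_image_of_injective _ σ.injective,
        Finset.card_biUnion (fun a _ b _ hab => hAdisj a b hab)]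
      have hc : ∀ j ∈ t, (A j).card = m := fun j hj =>
        hAcard j (Finset.mem_range.mp (Finset.mem_powerset.mp ht hj))
      rw [Finset.sum_congr rfl hc, Finset.sum_const, smul_eq_mul, mul_comm]
    have hint_term : ∀ t ∈ (Finset.range k).powerset,
        Integrable (fun ω => lam ^ t.card * ∏ i ∈ (t.biUnion A).image σ, V ω i) P := by
      intro t _
      apply hbd_int _ (|lam ^ t.card|)
      · exact (Finset.measurable_prod _ fun i _ => hVmeas i).const_mul _
      · intro ω
        rw [norm_mul]
        calc ‖lam ^ t.card‖ * ‖∏ i ∈ (t.biUnion A).image σ, V ω i‖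
            ≤ ‖lam ^ t.card‖ * 1 := by
              apply mul_le_mul_of_nonneg_left _ (norm_nonneg _)
              rw [Real.norm_eq_abs, abs_of_nonneg (Finset.prod_nonneg fun i _ => hVnn ω i)]
              exact Finset.prod_le_one (fun i _ => hVnn ω i) (fun i _ => hVle ω i)
          _ = |lam ^ t.card| := by rw [mul_one, Real.norm_eq_abs]
    have hfun : (fun ω => Real.exp (T * W σ ω))
        = fun ω => ∑ t ∈ (Finset.range k).powerset,
            lam ^ t.card * ∏ i ∈ (t.biUnion A).image σ, V ω i := funext hpt
    rw [hfun, integral_finset_sum _ hint_term]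
    have hterm : ∀ t ∈ (Finset.range k).powerset,
        (∫ ω, lam ^ t.card * ∏ i ∈ (t.biUnion A).image σ, V ω i ∂P)
          = (lam * p ^ m) ^ t.card := by
      intro t ht
      rw [integral_const_mul, L4, hcard_u t ht, pow_mul, mul_pow]
    rw [Finset.sum_congr rfl hterm]
    have hexpand := Finset.prod_add (fun _ : ℕ => lam * p ^ m) (fun _ : ℕ => (1:ℝ))
      (Finset.range k)
    simp only [Finset.prod_const, Finset.prod_const_one, one_pow, mul_one, Finset.card_range] at hexpand
    rw [← hexpand, hlam]
    ring
  -- integrability of both sides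
  have hI1 : Integrable (fun ω => Real.exp (T * U ω)) P := by
    apply hbd_int _ (Real.exp |T|)
    · exact Real.measurable_exp.comp (hUmeas.const_mul T)
    · intro ω; exact hexp_bd (U ω) (hU01 ω).1 (hU01 ω).2
  have hIσ : ∀ σ, Integrable (fun ω => (N:ℝ)⁻¹ * Real.exp (T * W σ ω)) P := by
    intro σ
    apply hbd_int _ ((N:ℝ)⁻¹ * Real.exp |T|)
    · exact (Real.measurable_exp.comp ((hWmeas σ).const_mul T)).const_mul _
    · intro ω
      rw [norm_mul]
      have h1 := hexp_bd (W σ ω) (hW01 σ ω).1 (hW01 σ ω).2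
      have h2 : ‖(N:ℝ)⁻¹‖ = (N:ℝ)⁻¹ := by
        rw [Real.norm_eq_abs, abs_of_nonneg (by positivity)]
      rw [h2]
      exact mul_le_mul_of_nonneg_left h1 (by positivity)
  have hI2 : Integrable (fun ω => ∑ σ : Equiv.Perm (Fin d),
      (N:ℝ)⁻¹ * Real.exp (T * W σ ω)) P :=
    integrable_finset_sum _ fun σ _ => hIσ σ
  have final : (∫ ω, Real.exp (T * U ω) ∂P)
      ≤ (1 - p^m + p^m * Real.exp (T / (k:ℝ)))^k := by
    calc (∫ ω, Real.exp (T * U ω) ∂P)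
        ≤ ∫ ω, ∑ σ : Equiv.Perm (Fin d), (N:ℝ)⁻¹ * Real.exp (T * W σ ω) ∂P :=
          integral_mono hI1 hI2 claim2
      _ = ∑ σ : Equiv.Perm (Fin d), ∫ ω, (N:ℝ)⁻¹ * Real.exp (T * W σ ω) ∂P :=
          integral_finset_sum _ fun σ _ => hIσ σ
      _ = ∑ _σ : Equiv.Perm (Fin d),
            (N:ℝ)⁻¹ * ((1 - p^m + p^m * Real.exp (T / (k:ℝ)))^k) := by
          refine Finset.sum_congr rfl fun σ _ => ?_
          rw [integral_const_mul, claim3 σ]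
      _ = (1 - p^m + p^m * Real.exp (T / (k:ℝ)))^k := by
          rw [Finset.sum_const, Finset.card_univ, ← hN_def, nsmul_eq_mul]
          field_simp
  simpa only [hU_def, hV_def] using final
end

section
/- Fix n ≥ 2 and d ≥ n−1, set k = ⌊d/(n−1)⌋, and let p ∈ (0,1). Let (ξ_j^μ)_{1 ≤ j ≤ N, 2 ≤ μ ≤ M} be i.i.d. Bernoulli(p) random variables and fix an index i > d. Then for every t ≥ 0 and every h > 0, P( Σ*_{i_1,…,i_{n-1} ≤ d} Σ_{μ=2}^M ξ_i^μ ξ_{i_1}^μ ⋯ ξ_{i_{n-1}}^μ ≥ h ) ≤ exp( −t h + M p [ ( 1 − p^{n-1} + p^{n-1} exp( t (n−1)! C(d,n−1) / k ) )^k − 1 ] ), where Σ* runs over ordered tuples of pairwise distinct indices i_1,…,i_{n-1} in {1,…,d}. -/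
open MeasureTheory ProbabilityTheory Filter

open MeasureTheory ProbabilityTheory Filter Finset

section Helpers

variable {Ω : Type*} [MeasurableSpace Ω] {P : Measure Ω}

lemma my_integrable_of_bdd [IsFiniteMeasure P] {f : Ω → ℝ} (hf : Measurable f) {C : ℝ}
    (h : ∀ ω, |f ω| ≤ C) : Integrable f P :=
  (integrable_const C).mono' hf.aestronglyMeasurable (Filter.Eventually.of_forall fun ω => by
    simpa using h ω)

variable {ι : Type*} [Fintype ι] {f : ι → Ω → ℕ}

lemma my_measurable_comp_vec (hf : ∀ x, Measurable (f x)) (φ : (ι → ℕ) → ℝ) :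
    Measurable (fun ω => φ (fun x => f x ω)) :=
  (measurable_of_countable φ).comp (measurable_pi_lambda _ hf)

lemma my_indepFun_blocks (hind : iIndepFun (m := fun _ => ⊤) f P) (hf : ∀ x, Measurable (f x))
    (S T : Finset ι) (hST : Disjoint S T) (φ ψ : (ι → ℕ) → ℝ)
    (hφ : ∀ v w, (∀ x ∈ S, v x = w x) → φ v = φ w)
    (hψ : ∀ v w, (∀ x ∈ T, v x = w x) → ψ v = ψ w) :
    IndepFun (fun ω => φ (fun x => f x ω)) (fun ω => ψ (fun x => f x ω)) P := by
  classical
  have base := hind.indepFun_finset S T hST hf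
  set φ' : ((x : {y // y ∈ S}) → ℕ) → ℝ :=
    fun u => φ (fun x => if hx : x ∈ S then u ⟨x, hx⟩ else 0) with hφ'
  set ψ' : ((x : {y // y ∈ T}) → ℕ) → ℝ :=
    fun u => ψ (fun x => if hx : x ∈ T then u ⟨x, hx⟩ else 0) with hψ'
  have h1 : (fun ω => φ (fun x => f x ω)) = (φ' ∘ fun ω (x : {y // y ∈ S}) => f x ω) := by
    funext ω
    exact (hφ _ _ fun x hx => by simp [hx]).symm
  have h2 : (fun ω => ψ (fun x => f x ω)) = (ψ' ∘ fun ω (x : {y // y ∈ T}) => f x ω) := by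
    funext ω
    exact (hψ _ _ fun x hx => by simp [hx]).symm
  rw [h1, h2]
  exact base.comp (measurable_of_countable φ') (measurable_of_countable ψ')

lemma my_integral_prod_blocks [IsProbabilityMeasure P]
    (hind : iIndepFun (m := fun _ => ⊤) f P) (hf : ∀ x, Measurable (f x))
    {β : Type*} (s : Finset β) (B : β → Finset ι)
    (hdisj : ∀ b ∈ s, ∀ b' ∈ s, b ≠ b' → Disjoint (B b) (B b'))
    (φ : β → (ι → ℕ) → ℝ)
    (hdep : ∀ b ∈ s, ∀ v w, (∀ x ∈ B b, v x = w x) → φ b v = φ b w) :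
    ∫ ω, ∏ b ∈ s, φ b (fun x => f x ω) ∂P = ∏ b ∈ s, ∫ ω, φ b (fun x => f x ω) ∂P := by
  classical
  induction s using Finset.induction with
  | empty => simp
  | @insert a s ha ih =>
    have hdisj' : ∀ b ∈ s, ∀ b' ∈ s, b ≠ b' → Disjoint (B b) (B b') :=
      fun b hb b' hb' => hdisj b (mem_insert_of_mem hb) b' (mem_insert_of_mem hb')
    have hdep' : ∀ b ∈ s, ∀ v w, (∀ x ∈ B b, v x = w x) → φ b v = φ b w :=
      fun b hb => hdep b (mem_insert_of_mem hb)
    have hDaU : Disjoint (B a) (s.biUnion B) := by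
      rw [Finset.disjoint_biUnion_right]
      exact fun b hb => hdisj a (mem_insert_self a s) b (mem_insert_of_mem hb)
        (fun hab => ha (hab ▸ hb))
    set ψ : (ι → ℕ) → ℝ := fun v => ∏ b ∈ s, φ b v with hψdef
    have hindep2 : IndepFun (fun ω => φ a (fun x => f x ω)) (fun ω => ψ (fun x => f x ω)) P := by
      refine my_indepFun_blocks hind hf (B a) (s.biUnion B) hDaU _ _
        (hdep a (mem_insert_self a s)) ?_
      intro v w hvw
      exact Finset.prod_congr rfl fun b hb => hdep' b hb v w fun x hx =>
        hvw x (Finset.mem_biUnion.2 ⟨b, hb, hx⟩)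
    have hmul := hindep2.integral_fun_mul_eq_mul_integral
      (my_measurable_comp_vec hf (φ a)).aestronglyMeasurable
      (my_measurable_comp_vec hf ψ).aestronglyMeasurable
    rw [Finset.prod_insert ha]
    calc ∫ ω, ∏ b ∈ insert a s, φ b (fun x => f x ω) ∂P
        = ∫ ω, φ a (fun x => f x ω) * ψ (fun x => f x ω) ∂P := by
          congr 1; funext ω; rw [Finset.prod_insert ha]
      _ = (∫ ω, φ a (fun x => f x ω) ∂P) * ∫ ω, ψ (fun x => f x ω) ∂P := hmul
      _ = (∫ ω, φ a (fun x => f x ω) ∂P) * ∏ b ∈ s, ∫ ω, φ b (fun x => f x ω) ∂P := by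
          rw [hψdef]; rw [ih hdisj' hdep']

end Helpers
open Finset Function

section Perm

lemma my_exists_perm_ext {m d : ℕ} (e js : Fin m → Fin d) (he : Injective e)
    (hjs : Injective js) : ∃ σ : Equiv.Perm (Fin d), σ ∘ e = js := by
  classical
  set f : Fin d → Fin d := fun x => if h : ∃ l, e l = x then js h.choose else x with hf
  have hfe : ∀ l, f (e l) = js l := by
    intro l
    have h : ∃ l', e l' = e l := ⟨l, rfl⟩
    have : e h.choose = e l := h.choose_spec
    simp only [hf, dif_pos h]
    rw [he this]
  have hαt : Fintype.card (Fin d) = (Finset.univ : Finset (Fin d)).card := by simp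
  have hfst : Finset.image f (Finset.univ.image e) ⊆ Finset.univ := fun x _ => mem_univ x
  have hfs : Set.InjOn f (Finset.univ.image e) := by
    intro x hx y hy hxy
    simp only [coe_image, Set.mem_image] at hx hy
    obtain ⟨l1, -, rfl⟩ := hx
    obtain ⟨l2, -, rfl⟩ := hy
    rw [hfe, hfe] at hxy
    rw [hjs hxy]
  obtain ⟨g, hg⟩ := Finset.exists_equiv_extend_of_card_eq hαt hfst hfs
  refine ⟨g.trans (Equiv.subtypeUnivEquiv fun x => mem_univ x), ?_⟩
  funext l
  have := hg (e l) (mem_image_of_mem e (mem_univ l))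
  simp only [Equiv.trans_apply, Equiv.subtypeUnivEquiv_apply, comp_apply]
  rw [this, hfe]

lemma my_perm_sum_comp {m d : ℕ} (e : Fin m → Fin d) (he : Injective e)
    (g : (Fin m → Fin d) → ℝ) :
    ((Finset.univ.filter (fun js : Fin m → Fin d => Injective js)).card : ℝ) *
      ∑ σ : Equiv.Perm (Fin d), g (σ ∘ e)
    = (d.factorial : ℝ) *
      ∑ js ∈ Finset.univ.filter (fun js : Fin m → Fin d => Injective js), g js := by
  classical
  set E := Finset.univ.filter (fun js : Fin m → Fin d => Injective js) with hE
  set fib : (Fin m → Fin d) → Finset (Equiv.Perm (Fin d)) :=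
    fun js => Finset.univ.filter (fun σ => σ ∘ e = js) with hfib
  have hmaps : ∀ σ : Equiv.Perm (Fin d), σ ∈ (Finset.univ : Finset (Equiv.Perm (Fin d))) →
      σ ∘ e ∈ E := by
    intro σ _
    simp only [hE, mem_filter, mem_univ, true_and]
    exact σ.injective.comp he
  -- all fibers have the same cardinality
  have hcard : ∀ js ∈ E, (fib js).card = (fib e).card := by
    intro js hjs
    have hjsinj : Injective js := by simpa [hE] using hjs
    obtain ⟨σ0, hσ0⟩ := my_exists_perm_ext e js he hjsinj
    apply Finset.card_bij (fun σ _ => σ0⁻¹ * σ)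
    · intro σ hσ
      have hσ' : σ ∘ e = js := by simpa [hfib] using hσ
      simp only [hfib, mem_filter, mem_univ, true_and]
      funext l
      have h1 : σ (e l) = js l := congrFun hσ' l
      have h2 : σ0 (e l) = js l := congrFun hσ0 l
      simp [Equiv.Perm.mul_apply, h1, ← h2]
    · intro σ1 h1 σ2 h2 hgh
      simpa using congrArg (fun τ => σ0 * τ) hgh
    · intro τ hτ
      have hτ' : τ ∘ e = e := by simpa [hfib] using hτ
      refine ⟨σ0 * τ, ?_, by simp [mul_assoc]⟩
      simp only [hfib, mem_filter, mem_univ, true_and]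
      funext l
      have h1 : τ (e l) = e l := congrFun hτ' l
      have h2 : σ0 (e l) = js l := congrFun hσ0 l
      simp [Equiv.Perm.mul_apply, h1, h2]
  have hsum : ∑ σ : Equiv.Perm (Fin d), g (σ ∘ e)
      = ∑ js ∈ E, ((fib js).card : ℝ) * g js := by
    rw [← Finset.sum_fiberwise_of_maps_to hmaps (fun σ => g (σ ∘ e))]
    refine Finset.sum_congr rfl fun js hjs => ?_
    calc ∑ σ ∈ Finset.univ.filter (fun σ : Equiv.Perm (Fin d) => (σ : Fin d → Fin d) ∘ e = js),
          g ((σ : Fin d → Fin d) ∘ e)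
        = ∑ σ ∈ Finset.univ.filter (fun σ : Equiv.Perm (Fin d) => (σ : Fin d → Fin d) ∘ e = js),
          g js := Finset.sum_congr rfl (fun σ hσ => by
            rw [show (σ : Fin d → Fin d) ∘ e = js from (Finset.mem_filter.1 hσ).2])
      _ = ((fib js).card : ℝ) * g js := by rw [Finset.sum_const, nsmul_eq_mul]
  have hcount : E.card * (fib e).card = d.factorial := by
    have h1 : (Finset.univ : Finset (Equiv.Perm (Fin d))).card
        = ∑ js ∈ E, (fib js).card := Finset.card_eq_sum_card_fiberwise hmaps
    have h2 : ∑ js ∈ E, (fib js).card = E.card * (fib e).card := by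
      rw [Finset.sum_congr rfl hcard, Finset.sum_const, smul_eq_mul]
    rw [← h2, ← h1, Finset.card_univ, Fintype.card_perm, Fintype.card_fin]
  rw [hsum, Finset.mul_sum, Finset.mul_sum]
  refine Finset.sum_congr rfl fun js hjs => ?_
  rw [hcard js hjs, ← mul_assoc, ← Nat.cast_mul, hcount]

lemma my_card_inj (m d : ℕ) :
    (Finset.univ.filter (fun js : Fin m → Fin d => Injective js)).card
      = m.factorial * d.choose m := by
  classical
  rw [← Fintype.card_subtype]
  rw [Fintype.card_congr (Equiv.subtypeInjectiveEquivEmbedding (Fin m) (Fin d))]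
  rw [Fintype.card_embedding_eq, Fintype.card_fin, Fintype.card_fin,
    Nat.descFactorial_eq_factorial_mul_choose]

lemma my_exp_avg_le {α : Type*} [Fintype α] [Nonempty α] (z : α → ℝ) :
    Real.exp ((∑ x, z x) / (Fintype.card α : ℝ)) ≤ (∑ x, Real.exp (z x)) / Fintype.card α := by
  have hcard : (0:ℝ) < Fintype.card α := by
    exact_mod_cast Fintype.card_pos
  have h := convexOn_exp.map_sum_le (t := Finset.univ)
    (w := fun _ : α => (Fintype.card α : ℝ)⁻¹) (p := z)
    (fun _ _ => by positivity)
    (by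
      rw [Finset.sum_const, Finset.card_univ, nsmul_eq_mul]
      field_simp)
    (fun _ _ => Set.mem_univ _)
  have h1 : (∑ x, z x) / (Fintype.card α : ℝ) = ∑ x : α, (Fintype.card α : ℝ)⁻¹ • z x := by
    rw [div_eq_inv_mul, Finset.mul_sum]
    exact Finset.sum_congr rfl fun x _ => (smul_eq_mul _ _).symm
  have h2 : (∑ x, Real.exp (z x)) / (Fintype.card α : ℝ)
      = ∑ x : α, (Fintype.card α : ℝ)⁻¹ • Real.exp (z x) := by
    rw [div_eq_inv_mul, Finset.mul_sum]
    exact Finset.sum_congr rfl fun x _ => (smul_eq_mul _ _).symm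
  rw [h1, h2]
  exact h

end Perm


open Classical in
/-- **Exponential Markov bound for the false field at a zero coordinate.**
Let `n ≥ 2`, `n − 1 ≤ d`, `k = ⌊d/(n−1)⌋` and `p ∈ (0,1)`.  Let `(ξ_j^μ)_{1≤j≤N, 2≤μ≤M}`
be i.i.d. Bernoulli(p) random variables and let `i` be an index outside `{1, …, d}`.
Then for every `t ≥ 0` and `h > 0`,
`P(∑*_{i₁,…,i_{n-1} ≤ d} ∑_{μ=2}^M ξ_i^μ ξ_{i₁}^μ ⋯ ξ_{i_{n-1}}^μ ≥ h)
  ≤ exp(−t h + M p [(1 − p^{n-1} + p^{n-1} exp(t (n−1)! C(d,n−1)/k))^k − 1])`,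
where `∑*` runs over ordered tuples of pairwise distinct indices in `{1, …, d}`. -/
theorem false_field_exponential_markov
    (N d n M : ℕ) (hn : 2 ≤ n) (hd : n - 1 ≤ d) (hdN : d < N) (hM : 2 ≤ M)
    (p : ℝ) (hp0 : 0 < p) (hp1 : p < 1)
    (Ω : Type*) [MeasurableSpace Ω] (P : Measure Ω) [IsProbabilityMeasure P]
    (ξ : Ω → Fin (M - 1) → Fin N → ℕ)
    (hmeas : ∀ μ j, Measurable fun ω => ξ ω μ j)
    (h01 : ∀ ω μ j, ξ ω μ j ≤ 1)
    (hindep : iIndepFun (m := fun _ => ⊤)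
      (fun pr : Fin (M - 1) × Fin N => fun ω => ξ ω pr.1 pr.2) P)
    (hber : ∀ μ j, P {ω | ξ ω μ j = 1} = ENNReal.ofReal p)
    (i : Fin N) (hi : d ≤ (i : ℕ))
    (t h : ℝ) (ht : 0 ≤ t) (hh : 0 < h) :
    P {ω | h ≤ (∑ js ∈ Finset.univ.filter (fun js : Fin (n - 1) → Fin N =>
          Function.Injective js ∧ ∀ k, (js k : ℕ) < d),
        ∑ μ, ξ ω μ i * ∏ k, ξ ω μ (js k) : ℝ)}
      ≤ ENNReal.ofReal (Real.exp (-(t * h) + M * p *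
          ((1 - p ^ (n - 1) + p ^ (n - 1) *
              Real.exp (t * (n - 1).factorial * (d.choose (n - 1) : ℝ)
                / ((d / (n - 1) : ℕ) : ℝ))) ^ (d / (n - 1) : ℕ) - 1))) := by
  classical
  have hm0 : 0 < n - 1 := by omega
  set m := n - 1 with hmdef
  set k := d / m with hkdef
  have hk0 : 0 < k := Nat.div_pos hd hm0
  have hdN' : d ≤ N := Nat.le_of_lt hdN
  set cN := m.factorial * d.choose m with hcNdef
  have hcN0 : 0 < cN := Nat.mul_pos m.factorial_pos (Nat.choose_pos hd)
  set a := t * (m.factorial : ℝ) * (d.choose m : ℝ) / (k : ℝ) with hadef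
  have ha0 : 0 ≤ a := by positivity
  set A := 1 - p ^ m + p ^ m * Real.exp a with hAdef
  have hexpa1 : 1 ≤ Real.exp a := Real.one_le_exp ha0
  have hpm0 : 0 ≤ p ^ m := pow_nonneg hp0.le m
  have hA1 : 1 ≤ A := by
    have : A = 1 + p ^ m * (Real.exp a - 1) := by rw [hAdef]; ring
    rw [this]
    nlinarith
  have hAk1 : 1 ≤ A ^ k := one_le_pow₀ hA1
  -- the basic random variables
  set F : Fin (M - 1) × Fin N → Ω → ℕ := fun x ω => ξ ω x.1 x.2 with hFdef
  have hFm : ∀ x, Measurable (F x) := fun x => hmeas x.1 x.2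
  have hindF : iIndepFun (m := fun _ => ⊤) F P := hindep
  have hcm : ∀ (μ : Fin (M - 1)) (j : Fin N), Measurable (fun ω => (ξ ω μ j : ℝ)) :=
    fun μ j => (measurable_of_countable _).comp (hmeas μ j)
  have hc0 : ∀ (ω : Ω) (μ : Fin (M - 1)) (j : Fin N), (0:ℝ) ≤ (ξ ω μ j : ℝ) :=
    fun ω μ j => Nat.cast_nonneg _
  have hc1 : ∀ (ω : Ω) (μ : Fin (M - 1)) (j : Fin N), (ξ ω μ j : ℝ) ≤ 1 := by
    intro ω μ j
    exact_mod_cast h01 ω μ j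
  set T : Finset (Fin m → Fin N) :=
    Finset.univ.filter (fun js : Fin m → Fin N =>
      Function.Injective js ∧ ∀ l, (js l : ℕ) < d) with hTdef
  set Y : Fin (M - 1) → Ω → ℝ :=
    fun μ ω => ∑ js ∈ T, ∏ l, (ξ ω μ (js l) : ℝ) with hYdef
  set X : Fin (M - 1) → Ω → ℝ := fun μ ω => (ξ ω μ i : ℝ) * Y μ ω with hXdef
  set S : Ω → ℝ := fun ω => ∑ μ, X μ ω with hSdef
  -- expectation of a single coordinate
  have hsingle : ∀ (μ : Fin (M - 1)) (j : Fin N), ∫ ω, (ξ ω μ j : ℝ) ∂P = p := by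
    intro μ j
    have hms : MeasurableSet {ω | ξ ω μ j = 1} := hmeas μ j (measurableSet_singleton 1)
    have hfun : (fun ω => (ξ ω μ j : ℝ))
        = Set.indicator {ω | ξ ω μ j = 1} (fun _ => (1:ℝ)) := by
      funext ω
      rcases Nat.le_one_iff_eq_zero_or_eq_one.1 (h01 ω μ j) with h0 | h1
      · rw [Set.indicator_of_notMem (by simp [Set.mem_setOf_eq, h0]), h0, Nat.cast_zero]
      · rw [Set.indicator_of_mem (by simp [Set.mem_setOf_eq, h1]), h1, Nat.cast_one]
    rw [hfun, MeasureTheory.integral_indicator_const _ hms, measureReal_def, hber μ j,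
      ENNReal.toReal_ofReal hp0.le, smul_eq_mul, mul_one]
  -- bounds on Y
  have hY0 : ∀ μ ω, 0 ≤ Y μ ω := by
    intro μ ω
    exact Finset.sum_nonneg fun js _ => Finset.prod_nonneg fun l _ => hc0 ω μ (js l)
  have hY1 : ∀ μ ω, Y μ ω ≤ T.card := by
    intro μ ω
    calc Y μ ω ≤ ∑ js ∈ T, 1 := Finset.sum_le_sum fun js _ =>
          Finset.prod_le_one (fun l _ => hc0 ω μ (js l)) (fun l _ => hc1 ω μ (js l))
      _ = T.card := by simp
  have hYmeas : ∀ μ, Measurable (Y μ) :=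
    fun μ => Finset.measurable_sum _ fun js _ => Finset.measurable_prod _ fun l _ => hcm μ (js l)
  have hX0 : ∀ μ ω, 0 ≤ X μ ω := fun μ ω => mul_nonneg (hc0 ω μ i) (hY0 μ ω)
  have hX1 : ∀ μ ω, X μ ω ≤ T.card := by
    intro μ ω
    calc X μ ω ≤ 1 * Y μ ω := by
          have := hY0 μ ω; have := hc1 ω μ i; apply mul_le_mul_of_nonneg_right <;> assumption
      _ = Y μ ω := one_mul _
      _ ≤ T.card := hY1 μ ω
  have hXmeas : ∀ μ, Measurable (X μ) := fun μ => (hcm μ i).mul (hYmeas μ)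
  have hSmeas : Measurable S := Finset.measurable_sum _ fun μ _ => hXmeas μ
  have hS0 : ∀ ω, 0 ≤ S ω := fun ω => Finset.sum_nonneg fun μ _ => hX0 μ ω
  have hSbd : ∀ ω, S ω ≤ ((M - 1 : ℕ) : ℝ) * T.card := by
    intro ω
    calc S ω ≤ ∑ _μ : Fin (M - 1), (T.card : ℝ) := Finset.sum_le_sum fun μ _ => hX1 μ ω
      _ = ((M - 1 : ℕ) : ℝ) * T.card := by
          rw [Finset.sum_const, Finset.card_univ, Fintype.card_fin, nsmul_eq_mul]
  -- integrability of exp (t * S)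
  have hint : Integrable (fun ω => Real.exp (t * S ω)) P := by
    refine my_integrable_of_bdd (hSmeas.const_mul t).exp
      (C := Real.exp (t * (((M - 1 : ℕ) : ℝ) * T.card))) ?_
    intro ω
    rw [abs_of_pos (Real.exp_pos _), Real.exp_le_exp]
    exact mul_le_mul_of_nonneg_left (hSbd ω) ht
  -- Chernoff
  have chern : (P {ω | h ≤ S ω}).toReal ≤ Real.exp (-t * h) * mgf S P t :=
    measure_ge_le_exp_mul_mgf h ht hint
  -- block machinery
  have hkm : k * m ≤ d := by rw [hkdef]; exact Nat.div_mul_le_self d m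
  set emb : Fin d → Fin N := Fin.castLE hdN' with hembdef
  have hembinj : Function.Injective emb := Fin.castLE_injective hdN'
  have hposlt : ∀ (j : Fin k) (l : Fin m), j.1 * m + l.1 < d := by
    intro j l
    have h1 : j.1 * m + l.1 < j.1 * m + m := by omega
    have h2 : j.1 * m + m = (j.1 + 1) * m := by ring
    have h3 : (j.1 + 1) * m ≤ k * m := Nat.mul_le_mul_right m j.2
    omega
  set pos : Fin k → Fin m → Fin d := fun j l => ⟨j.1 * m + l.1, hposlt j l⟩ with hposdef
  have hposinj : ∀ (j j' : Fin k) (l l' : Fin m), pos j l = pos j' l' → j = j' ∧ l = l' := by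
    intro j j' l l' hp
    have hv : j.1 * m + l.1 = j'.1 * m + l'.1 := congrArg Fin.val hp
    have hdiv : ∀ (u : Fin k) (w : Fin m), (u.1 * m + w.1) / m = u.1 := by
      intro u w
      rw [Nat.add_comm, Nat.add_mul_div_right _ _ hm0, Nat.div_eq_of_lt w.2, Nat.zero_add]
    have hj : j.1 = j'.1 := by rw [← hdiv j l, ← hdiv j' l', hv]
    constructor
    · exact Fin.ext hj
    · refine Fin.ext ?_
      have hjm : j.1 * m = j'.1 * m := by rw [hj]
      omega
  -- the Hoeffding bound for a single pattern
  have hEmu : ∀ μ : Fin (M - 1), ∫ ω, Real.exp (t * Y μ ω) ∂P ≤ A ^ k := by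
    intro μ
    set Bf : Equiv.Perm (Fin d) → Fin k → Ω → ℝ :=
      fun σ j ω => ∏ l, (ξ ω μ (emb (σ (pos j l))) : ℝ) with hBdef
    have hB0 : ∀ σ j ω, 0 ≤ Bf σ j ω :=
      fun σ j ω => Finset.prod_nonneg fun l _ => hc0 ω μ _
    have hB1 : ∀ σ j ω, Bf σ j ω ≤ 1 :=
      fun σ j ω => Finset.prod_le_one (fun l _ => hc0 ω μ _) (fun l _ => hc1 ω μ _)
    have hBmeas : ∀ σ j, Measurable (Bf σ j) :=
      fun σ j => Finset.measurable_prod _ fun l _ => hcm μ _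
    -- counting claim
    have claim1 : ∀ ω, (cN : ℝ) * ∑ σ : Equiv.Perm (Fin d), ∑ j, Bf σ j ω
        = (d.factorial : ℝ) * k * Y μ ω := by
      intro ω
      set g : (Fin m → Fin d) → ℝ := fun js => ∏ l, (ξ ω μ (emb (js l)) : ℝ) with hgdef
      have hd0 : 0 < d := lt_of_lt_of_le hm0 hd
      have hEY : ∑ js ∈ Finset.univ.filter (fun js : Fin m → Fin d => Function.Injective js),
          g js = Y μ ω := by
        refine Finset.sum_nbij' (i := fun js => emb ∘ js)
          (j := fun js' l => if hlt : (js' l : ℕ) < d then (⟨(js' l : ℕ), hlt⟩ : Fin d)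
            else ⟨0, hd0⟩) ?_ ?_ ?_ ?_ ?_
        · intro js hjs
          have hjsinj : Function.Injective js := by simpa using (Finset.mem_filter.1 hjs).2
          rw [hTdef, Finset.mem_filter]
          exact ⟨Finset.mem_univ _, hembinj.comp hjsinj, fun l => (js l).2⟩
        · intro js' hjs'
          rw [hTdef, Finset.mem_filter] at hjs'
          obtain ⟨-, hinj, hlt⟩ := hjs'
          rw [Finset.mem_filter]
          refine ⟨Finset.mem_univ _, fun l l' hll => ?_⟩
          simp only [dif_pos (hlt l), dif_pos (hlt l'), Fin.mk.injEq] at hll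
          exact hinj (Fin.ext hll)
        · intro js hjs
          funext l
          have hlt : ((emb (js l) : Fin N) : ℕ) < d := (js l).2
          simp only [Function.comp_apply]
          rw [dif_pos hlt]
          exact Fin.ext rfl
        · intro js' hjs'
          rw [hTdef, Finset.mem_filter] at hjs'
          obtain ⟨-, hinj, hlt⟩ := hjs'
          funext l
          simp only [Function.comp_apply]
          rw [dif_pos (hlt l)]
          exact Fin.ext rfl
        · intro js hjs
          rfl
      have hperm : ∀ j : Fin k, (cN : ℝ) * ∑ σ : Equiv.Perm (Fin d), Bf σ j ω
          = (d.factorial : ℝ) * Y μ ω := by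
        intro j
        have hinj : Function.Injective (pos j) := fun l l' hll => (hposinj j j l l' hll).2
        have hps := my_perm_sum_comp (pos j) hinj g
        rw [my_card_inj, ← hcNdef, hEY] at hps
        exact hps
      calc (cN : ℝ) * ∑ σ : Equiv.Perm (Fin d), ∑ j, Bf σ j ω
          = (cN : ℝ) * ∑ j : Fin k, ∑ σ : Equiv.Perm (Fin d), Bf σ j ω := by
            rw [Finset.sum_comm]
        _ = ∑ j : Fin k, (cN : ℝ) * ∑ σ : Equiv.Perm (Fin d), Bf σ j ω :=
            Finset.mul_sum _ _ _
        _ = ∑ _j : Fin k, (d.factorial : ℝ) * Y μ ω :=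
            Finset.sum_congr rfl fun j _ => hperm j
        _ = (d.factorial : ℝ) * k * Y μ ω := by
            rw [Finset.sum_const, Finset.card_univ, Fintype.card_fin, nsmul_eq_mul]
            ring
    -- Jensen
    have hjensen : ∀ ω, Real.exp (t * Y μ ω)
        ≤ (∑ σ : Equiv.Perm (Fin d), Real.exp (a * ∑ j, Bf σ j ω)) / (d.factorial : ℝ) := by
      intro ω
      have hcardP : (Fintype.card (Equiv.Perm (Fin d)) : ℝ) = (d.factorial : ℝ) := by
        rw [Fintype.card_perm, Fintype.card_fin]
      have hcne : (cN : ℝ) ≠ 0 := Nat.cast_ne_zero.2 hcN0.ne'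
      have hkne : (k : ℝ) ≠ 0 := Nat.cast_ne_zero.2 hk0.ne'
      have hfne : (d.factorial : ℝ) ≠ 0 := Nat.cast_ne_zero.2 d.factorial_pos.ne'
      have hc1 := claim1 ω
      have hcast : (cN : ℝ) = (m.factorial : ℝ) * (d.choose m : ℝ) := by
        rw [hcNdef]; push_cast; ring
      rw [hcast] at hc1
      have heq : t * Y μ ω
          = (∑ σ : Equiv.Perm (Fin d), a * ∑ j, Bf σ j ω) / (d.factorial : ℝ) := by
        rw [eq_div_iff hfne, ← Finset.mul_sum, hadef, div_mul_eq_mul_div,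
          eq_comm, div_eq_iff hkne]
        linear_combination t * hc1
      rw [heq]
      have hle := my_exp_avg_le (α := Equiv.Perm (Fin d)) (fun σ => a * ∑ j, Bf σ j ω)
      rw [hcardP] at hle
      exact hle
    -- expectation over one permutation
    have hSig : ∀ σ : Equiv.Perm (Fin d),
        ∫ ω, Real.exp (a * ∑ j, Bf σ j ω) ∂P = A ^ k := by
      intro σ
      have hbc : ∀ (j j' : Fin k) (l l' : Fin m),
          emb (σ (pos j l)) = emb (σ (pos j' l')) → j = j' ∧ l = l' := by
        intro j j' l l' hE
        exact hposinj _ _ _ _ (σ.injective (hembinj hE))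
      have hblock : ∀ j : Fin k, ∫ ω, Real.exp (a * Bf σ j ω) ∂P = A := by
        intro j
        have hB01 : ∀ ω, Bf σ j ω = 0 ∨ Bf σ j ω = 1 := by
          intro ω
          have hnat : Bf σ j ω = ((∏ l, ξ ω μ (emb (σ (pos j l))) : ℕ) : ℝ) := by
            rw [hBdef]; push_cast; rfl
          have hle1 : (∏ l, ξ ω μ (emb (σ (pos j l))) : ℕ) ≤ 1 :=
            Finset.prod_le_one (fun l _ => Nat.zero_le _) (fun l _ => h01 ω μ _)
          rcases Nat.le_one_iff_eq_zero_or_eq_one.1 hle1 with h0 | h1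
          · left; rw [hnat, h0, Nat.cast_zero]
          · right; rw [hnat, h1, Nat.cast_one]
        have hpoint : ∀ ω, Real.exp (a * Bf σ j ω) = 1 + Bf σ j ω * (Real.exp a - 1) := by
          intro ω
          rcases hB01 ω with h0 | h1
          · rw [h0, mul_zero, Real.exp_zero, zero_mul, add_zero]
          · rw [h1, mul_one, one_mul]; ring
        have hEB : ∫ ω, Bf σ j ω ∂P = p ^ m := by
          have hbl := my_integral_prod_blocks hindF hFm (Finset.univ : Finset (Fin m))
            (fun l => {((μ, emb (σ (pos j l))) : Fin (M - 1) × Fin N)})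
            (fun l _ l' _ hll => by
              rw [Finset.disjoint_singleton]
              intro hEq
              exact hll (hbc j j l l' (congrArg Prod.snd hEq)).2)
            (fun l v => (v ((μ, emb (σ (pos j l))) : Fin (M - 1) × Fin N) : ℝ))
            (fun l _ v w hvw =>
              congrArg (fun x : ℕ => (x : ℝ)) (hvw _ (Finset.mem_singleton_self _)))
          calc ∫ ω, Bf σ j ω ∂P
              = ∫ ω, ∏ l : Fin m, ((fun x => F x ω) ((μ, emb (σ (pos j l)))
                  : Fin (M - 1) × Fin N) : ℝ) ∂P := rfl
            _ = ∏ l : Fin m, ∫ ω, ((fun x => F x ω) ((μ, emb (σ (pos j l)))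
                  : Fin (M - 1) × Fin N) : ℝ) ∂P := hbl
            _ = ∏ _l : Fin m, p := Finset.prod_congr rfl fun l _ => hsingle μ _
            _ = p ^ m := by rw [Finset.prod_const, Finset.card_univ, Fintype.card_fin]
        have hpointeq : (fun ω => Real.exp (a * Bf σ j ω))
            = fun ω => 1 + Bf σ j ω * (Real.exp a - 1) := funext hpoint
        rw [hpointeq]
        have hint1 : Integrable (fun ω => Bf σ j ω * (Real.exp a - 1)) P := by
          refine my_integrable_of_bdd ((hBmeas σ j).mul_const _) (C := |Real.exp a - 1|) ?_
          intro ω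
          rw [abs_mul]
          have h1 : |Bf σ j ω| ≤ 1 := abs_le.2 ⟨by linarith [hB0 σ j ω], hB1 σ j ω⟩
          calc |Bf σ j ω| * |Real.exp a - 1| ≤ 1 * |Real.exp a - 1| :=
                mul_le_mul_of_nonneg_right h1 (abs_nonneg _)
            _ = |Real.exp a - 1| := one_mul _
        rw [integral_add (integrable_const 1) hint1, integral_const,
          integral_mul_const, hEB]
        simp only [probReal_univ, measure_univ, ENNReal.toReal_one, smul_eq_mul, mul_one]
        rw [hAdef]; ring
      have hexpand : (fun ω => Real.exp (a * ∑ j, Bf σ j ω))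
          = fun ω => ∏ j : Fin k, Real.exp (a * Bf σ j ω) := by
        funext ω
        rw [Finset.mul_sum, Real.exp_sum]
      rw [hexpand]
      have hbl2 := my_integral_prod_blocks hindF hFm (Finset.univ : Finset (Fin k))
        (fun j => Finset.image
          (fun l => ((μ, emb (σ (pos j l))) : Fin (M - 1) × Fin N)) Finset.univ)
        (fun j _ j' _ hjj => by
          rw [Finset.disjoint_left]
          intro x hx hx'
          obtain ⟨l, -, rfl⟩ := Finset.mem_image.1 hx
          obtain ⟨l', -, hEq⟩ := Finset.mem_image.1 hx'
          exact hjj ((hbc j' j l' l (congrArg Prod.snd hEq)).1).symm)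
        (fun j v => Real.exp (a * ∏ l, (v ((μ, emb (σ (pos j l)))
          : Fin (M - 1) × Fin N) : ℝ)))
        (fun j _ v w hvw => by
          have hl : ∀ l : Fin m, v ((μ, emb (σ (pos j l))) : Fin (M - 1) × Fin N)
              = w ((μ, emb (σ (pos j l))) : Fin (M - 1) × Fin N) :=
            fun l => hvw _ (Finset.mem_image_of_mem _ (Finset.mem_univ l))
          simp only [hl])
      calc ∫ ω, ∏ j : Fin k, Real.exp (a * Bf σ j ω) ∂P
          = ∏ j : Fin k, ∫ ω, Real.exp (a * Bf σ j ω) ∂P := hbl2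
        _ = A ^ k := by
          rw [Finset.prod_congr rfl fun j _ => hblock j, Finset.prod_const,
            Finset.card_univ, Fintype.card_fin]
    -- integrate
    have hintY : Integrable (fun ω => Real.exp (t * Y μ ω)) P := by
      refine my_integrable_of_bdd ((hYmeas μ).const_mul t).exp
        (C := Real.exp (t * T.card)) ?_
      intro ω
      rw [abs_of_pos (Real.exp_pos _), Real.exp_le_exp]
      exact mul_le_mul_of_nonneg_left (hY1 μ ω) ht
    have hintZ : ∀ σ : Equiv.Perm (Fin d),
        Integrable (fun ω => Real.exp (a * ∑ j, Bf σ j ω)) P := by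
      intro σ
      refine my_integrable_of_bdd
        (((Finset.measurable_sum _ fun j _ => hBmeas σ j).const_mul a).exp)
        (C := Real.exp (a * k)) ?_
      intro ω
      rw [abs_of_pos (Real.exp_pos _), Real.exp_le_exp]
      refine mul_le_mul_of_nonneg_left ?_ ha0
      calc ∑ j, Bf σ j ω ≤ ∑ _j : Fin k, (1:ℝ) := Finset.sum_le_sum fun j _ => hB1 σ j ω
        _ = k := by rw [Finset.sum_const, Finset.card_univ, Fintype.card_fin,
              nsmul_eq_mul, mul_one]
    have hintR : Integrable (fun ω =>
        (∑ σ : Equiv.Perm (Fin d), Real.exp (a * ∑ j, Bf σ j ω)) / (d.factorial : ℝ)) P :=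
      (integrable_finset_sum _ fun σ _ => hintZ σ).div_const _
    calc ∫ ω, Real.exp (t * Y μ ω) ∂P
        ≤ ∫ ω, (∑ σ : Equiv.Perm (Fin d), Real.exp (a * ∑ j, Bf σ j ω))
            / (d.factorial : ℝ) ∂P := integral_mono hintY hintR hjensen
      _ = (∑ σ : Equiv.Perm (Fin d), ∫ ω, Real.exp (a * ∑ j, Bf σ j ω) ∂P)
            / (d.factorial : ℝ) := by
          rw [integral_div, integral_finset_sum _ fun σ _ => hintZ σ]
      _ = ((Fintype.card (Equiv.Perm (Fin d)) : ℝ) * A ^ k) / (d.factorial : ℝ) := by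
          rw [Finset.sum_congr rfl fun σ _ => hSig σ, Finset.sum_const, Finset.card_univ,
            nsmul_eq_mul]
      _ = A ^ k := by
          rw [Fintype.card_perm, Fintype.card_fin]
          have hfne : (d.factorial : ℝ) ≠ 0 := Nat.cast_ne_zero.2 d.factorial_pos.ne'
          field_simp
  -- expectation of exp (t * X μ)
  have hImu : ∀ μ : Fin (M - 1), ∫ ω, Real.exp (t * X μ ω) ∂P
      = 1 + p * ((∫ ω, Real.exp (t * Y μ ω) ∂P) - 1) := by
    intro μ
    have hintY : Integrable (fun ω => Real.exp (t * Y μ ω)) P := by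
      refine my_integrable_of_bdd ((hYmeas μ).const_mul t).exp
        (C := Real.exp (t * T.card)) ?_
      intro ω
      rw [abs_of_pos (Real.exp_pos _), Real.exp_le_exp]
      exact mul_le_mul_of_nonneg_left (hY1 μ ω) ht
    have hpoint : ∀ ω, Real.exp (t * X μ ω)
        = 1 + (ξ ω μ i : ℝ) * (Real.exp (t * Y μ ω) - 1) := by
      intro ω
      rcases Nat.le_one_iff_eq_zero_or_eq_one.1 (h01 ω μ i) with h0 | h1
      · show Real.exp (t * ((ξ ω μ i : ℝ) * Y μ ω)) = _
        rw [h0, Nat.cast_zero, zero_mul, mul_zero, Real.exp_zero, zero_mul, add_zero]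
      · show Real.exp (t * ((ξ ω μ i : ℝ) * Y μ ω)) = _
        rw [h1, Nat.cast_one, one_mul, one_mul]
        ring
    have hfiltmem : ∀ js ∈ T, ∀ l : Fin m, ((js l : Fin N) : ℕ) < d := by
      intro js hjs
      rw [hTdef, Finset.mem_filter] at hjs
      exact hjs.2.2
    have hind2 : IndepFun (fun ω => (ξ ω μ i : ℝ))
        (fun ω => Real.exp (t * Y μ ω) - 1) P := by
      have hdisj2 : Disjoint ({((μ, i) : Fin (M - 1) × Fin N)} : Finset _)
          (({μ} : Finset (Fin (M - 1))) ×ˢ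
            (Finset.univ.filter (fun j : Fin N => (j : ℕ) < d))) := by
        rw [Finset.disjoint_singleton_left, Finset.mem_product]
        intro hcon
        have hlt : ((i : Fin N) : ℕ) < d := (Finset.mem_filter.1 hcon.2).2
        omega
      have hres := my_indepFun_blocks hindF hFm _ _ hdisj2
        (fun v => (v ((μ, i) : Fin (M - 1) × Fin N) : ℝ))
        (fun v => Real.exp (t * ∑ js ∈ T, ∏ l,
          (v ((μ, js l) : Fin (M - 1) × Fin N) : ℝ)) - 1)
        (fun v w hvw =>
          congrArg (fun x : ℕ => (x : ℝ)) (hvw _ (Finset.mem_singleton_self _)))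
        (fun v w hvw => by
          have hl : ∀ js ∈ T, ∀ l : Fin m,
              v ((μ, js l) : Fin (M - 1) × Fin N) = w ((μ, js l) : Fin (M - 1) × Fin N) := by
            intro js hjs l
            exact hvw _ (Finset.mem_product.2 ⟨Finset.mem_singleton_self μ,
              Finset.mem_filter.2 ⟨Finset.mem_univ _, hfiltmem js hjs l⟩⟩)
          have hsum : ∑ js ∈ T, ∏ l, (v ((μ, js l) : Fin (M - 1) × Fin N) : ℝ)
              = ∑ js ∈ T, ∏ l, (w ((μ, js l) : Fin (M - 1) × Fin N) : ℝ) :=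
            Finset.sum_congr rfl fun js hjs => Finset.prod_congr rfl fun l _ => by
              rw [hl js hjs l]
          simp only [hsum])
      exact hres
    have hg : Integrable (fun ω => (ξ ω μ i : ℝ) * (Real.exp (t * Y μ ω) - 1)) P := by
      refine my_integrable_of_bdd ((hcm μ i).mul
        ((((hYmeas μ).const_mul t).exp).sub measurable_const))
        (C := Real.exp (t * T.card) + 1) ?_
      intro ω
      rw [abs_mul]
      have h1 : |(ξ ω μ i : ℝ)| ≤ 1 := abs_le.2 ⟨by linarith [hc0 ω μ i], hc1 ω μ i⟩
      have h2 : |Real.exp (t * Y μ ω) - 1| ≤ Real.exp (t * T.card) + 1 := by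
        rw [abs_le]
        constructor
        · have := Real.exp_pos (t * Y μ ω); have := Real.exp_pos (t * (T.card : ℝ)); nlinarith
        · have hle : Real.exp (t * Y μ ω) ≤ Real.exp (t * T.card) := by
            rw [Real.exp_le_exp]
            exact mul_le_mul_of_nonneg_left (hY1 μ ω) ht
          linarith
      calc |(ξ ω μ i : ℝ)| * |Real.exp (t * Y μ ω) - 1|
          ≤ 1 * (Real.exp (t * T.card) + 1) :=
            mul_le_mul h1 h2 (abs_nonneg _) zero_le_one
        _ = Real.exp (t * T.card) + 1 := one_mul _
    have hpeq : (fun ω => Real.exp (t * X μ ω))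
        = fun ω => 1 + (ξ ω μ i : ℝ) * (Real.exp (t * Y μ ω) - 1) := funext hpoint
    rw [hpeq, integral_add (integrable_const 1) hg, integral_const]
    rw [hind2.integral_fun_mul_eq_mul_integral (hcm μ i).aestronglyMeasurable
      ((((hYmeas μ).const_mul t).exp.sub measurable_const).aestronglyMeasurable)]
    rw [hsingle μ i, integral_sub hintY (integrable_const 1), integral_const]
    simp only [probReal_univ, measure_univ, ENNReal.toReal_one, smul_eq_mul, mul_one, one_mul]
  -- the key estimate on the mgf
  have hmgf : mgf S P t ≤ Real.exp (M * p * (A ^ k - 1)) := by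
    have hfact : mgf S P t = ∏ μ, ∫ ω, Real.exp (t * X μ ω) ∂P := by
      have h1 : (fun ω => Real.exp (t * S ω)) = fun ω => ∏ μ, Real.exp (t * X μ ω) := by
        funext ω
        show Real.exp (t * ∑ μ, X μ ω) = _
        rw [Finset.mul_sum, Real.exp_sum]
      have hbl := my_integral_prod_blocks hindF hFm (Finset.univ : Finset (Fin (M - 1)))
        (fun μ => ({μ} : Finset (Fin (M - 1))) ×ˢ (Finset.univ : Finset (Fin N)))
        (fun μ _ μ' _ hμ => by
          rw [Finset.disjoint_left]
          intro x hx hx'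
          rw [Finset.mem_product, Finset.mem_singleton] at hx hx'
          exact hμ (by rw [← hx.1, hx'.1]))
        (fun μ v => Real.exp (t * ((v ((μ, i) : Fin (M - 1) × Fin N) : ℝ)
          * ∑ js ∈ T, ∏ l, (v ((μ, js l) : Fin (M - 1) × Fin N) : ℝ))))
        (fun μ _ v w hvw => by
          have hvwi : v ((μ, i) : Fin (M - 1) × Fin N) = w ((μ, i) : Fin (M - 1) × Fin N) :=
            hvw _ (Finset.mem_product.2 ⟨Finset.mem_singleton_self μ, Finset.mem_univ _⟩)
          have hl : ∀ (js : Fin m → Fin N) (l : Fin m),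
              v ((μ, js l) : Fin (M - 1) × Fin N) = w ((μ, js l) : Fin (M - 1) × Fin N) :=
            fun js l => hvw _ (Finset.mem_product.2
              ⟨Finset.mem_singleton_self μ, Finset.mem_univ _⟩)
          have hsum : ∑ js ∈ T, ∏ l, (v ((μ, js l) : Fin (M - 1) × Fin N) : ℝ)
              = ∑ js ∈ T, ∏ l, (w ((μ, js l) : Fin (M - 1) × Fin N) : ℝ) :=
            Finset.sum_congr rfl fun js _ => Finset.prod_congr rfl fun l _ => by
              rw [hl js l]
          simp only [hvwi, hsum])
      show ∫ ω, Real.exp (t * S ω) ∂P = _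
      rw [h1]
      exact hbl
    rw [hfact]
    have hu0 : 0 ≤ p * (A ^ k - 1) := mul_nonneg hp0.le (by linarith)
    have hfac : ∀ μ : Fin (M - 1), μ ∈ Finset.univ →
        ∫ ω, Real.exp (t * X μ ω) ∂P ≤ Real.exp (p * (A ^ k - 1)) := by
      intro μ _
      rw [hImu μ]
      have h1 : ∫ ω, Real.exp (t * Y μ ω) ∂P ≤ A ^ k := hEmu μ
      have h2 : 1 + p * ((∫ ω, Real.exp (t * Y μ ω) ∂P) - 1) ≤ 1 + p * (A ^ k - 1) := by
        nlinarith
      refine h2.trans ?_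
      have := Real.add_one_le_exp (p * (A ^ k - 1))
      linarith
    calc ∏ μ, ∫ ω, Real.exp (t * X μ ω) ∂P
        ≤ ∏ _μ : Fin (M - 1), Real.exp (p * (A ^ k - 1)) :=
          Finset.prod_le_prod (fun μ _ => integral_nonneg fun ω => (Real.exp_pos _).le) hfac
      _ = Real.exp (p * (A ^ k - 1)) ^ (M - 1) := by
          rw [Finset.prod_const, Finset.card_univ, Fintype.card_fin]
      _ ≤ Real.exp (M * p * (A ^ k - 1)) := by
          rw [← Real.exp_nat_mul, Real.exp_le_exp]
          have hMcast : ((M - 1 : ℕ) : ℝ) ≤ (M : ℝ) := by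
            have : (M - 1 : ℕ) ≤ M := Nat.sub_le M 1
            exact_mod_cast this
          calc ((M - 1 : ℕ) : ℝ) * (p * (A ^ k - 1)) ≤ M * (p * (A ^ k - 1)) :=
                mul_le_mul_of_nonneg_right hMcast hu0
            _ = M * p * (A ^ k - 1) := by ring
  -- set identification
  have hexpr : ∀ ω, (∑ js ∈ T, ∑ μ, (ξ ω μ i : ℝ) * ((∏ l, ξ ω μ (js l) : ℕ) : ℝ)) = S ω := by
    intro ω
    simp only [Nat.cast_prod]
    rw [Finset.sum_comm]
    refine Finset.sum_congr rfl fun μ _ => ?_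
    exact (Finset.mul_sum _ _ _).symm
  have hset : {ω | h ≤ (∑ js ∈ T,
        ∑ μ, (ξ ω μ i : ℝ) * ((∏ l, ξ ω μ (js l) : ℕ) : ℝ))} = {ω | h ≤ S ω} := by
    ext ω
    simp only [Set.mem_setOf_eq, hexpr]
  rw [hset]
  have hne : P {ω | h ≤ S ω} ≠ ⊤ := measure_ne_top _ _
  rw [← ENNReal.ofReal_toReal hne]
  apply ENNReal.ofReal_le_ofReal
  calc (P {ω | h ≤ S ω}).toReal ≤ Real.exp (-t * h) * mgf S P t := chern
    _ ≤ Real.exp (-t * h) * Real.exp (M * p * (A ^ k - 1)) := by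
        exact mul_le_mul_of_nonneg_left hmgf (Real.exp_pos _).le
    _ = Real.exp (-(t * h) + M * p * (A ^ k - 1)) := by
        rw [← Real.exp_add, neg_mul]
end

section
/- Let κ ∈ (0,1), γ ∈ (0,1), δ ∈ (γ,1), n = κ log N (assumed integer), h = γ^{n-1}(log N)^{n-1}, p = (log N)/N, d = (2−δ) log N, and M = α^{n-1} exp( κ((log N)² − log N log log N) ) with α > 0 so small that κ log( (2−δ)α/γ ) < −2. Let ξ^1,…,ξ^M ∈ {0,1}^N have i.i.d. Bernoulli(p) coordinates and set A_δ = { |Σ_{j=1}^N ξ_j^1 − log N| ≤ (1−δ) log N }. Then there exists c > 1 such that for all sufficiently large N and every coordinate i, P( T_i(ξ^1) ≠ ξ_i^1, ξ_i^1 = 0, A_δ ) ≤ N^{−c}, where T is the dynamics with Hebbian weights of order n and threshold h. -/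
open MeasureTheory ProbabilityTheory Filter
open scoped ENNReal

noncomputable section

/-- The Heaviside function `Θ(x) = 1_{x > 0}`. -/
def hstep (x : ℝ) : ℕ := if 0 < x then 1 else 0

/-- The Hebbian weight of order `n`:
`W_{i, j₁, …, j_{n-1}} = ∑_μ ξ_i^μ ξ_{j₁}^μ ⋯ ξ_{j_{n-1}}^μ`. -/
def hebbW {N M : ℕ} (n : ℕ) (ξ : Fin M → Fin N → ℕ) (i : Fin N)
    (js : Fin (n - 1) → Fin N) : ℕ :=
  ∑ μ : Fin M, ξ μ i * ∏ k : Fin (n - 1), ξ μ (js k)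

open Classical in
/-- The local field at site `i` for weights `W` of order `n`:
`∑*_{j₁,…,j_{n-1} pairwise distinct} σ_{j₁} ⋯ σ_{j_{n-1}} W_{i,j₁,…,j_{n-1}}`. -/
def sparseField {N : ℕ} (n : ℕ) (W : Fin N → (Fin (n - 1) → Fin N) → ℕ)
    (σ : Fin N → ℕ) (i : Fin N) : ℕ :=
  ∑ js ∈ Finset.univ.filter (fun js : Fin (n - 1) → Fin N => Function.Injective js),
    (∏ k, σ (js k)) * W i js

/-- One step of the retrieval dynamics with threshold `h`:
`T_i(σ) = Θ(local field − h)`. -/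
def sparseT {N : ℕ} (n : ℕ) (W : Fin N → (Fin (n - 1) → Fin N) → ℕ)
    (h : ℝ) (σ : Fin N → ℕ) (i : Fin N) : ℕ :=
  hstep ((sparseField n W σ i : ℝ) - h)

lemma aux_lintegral_prod {Ω ι : Type*} [MeasurableSpace Ω]
    (P : Measure Ω) [IsProbabilityMeasure P]
    (f : ι → Ω → ℕ) (hm : ∀ s, Measurable (f s)) (hb : ∀ s ω, f s ω ≤ 1)
    (hind : iIndepFun (m := fun _ => (⊤ : MeasurableSpace ℕ)) f P) (S : Finset ι) :
    ∫⁻ ω, ∏ s ∈ S, (f s ω : ℝ≥0∞) ∂P = ∏ s ∈ S, P {ω | f s ω = 1} := by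
  have hA : ∀ s, MeasurableSet {ω | f s ω = 1} := fun s =>
    (hm s) (MeasurableSpace.measurableSet_top (s := ({1} : Set ℕ)))
  have hpt : ∀ ω, (∏ s ∈ S, (f s ω : ℝ≥0∞)) =
      Set.indicator (⋂ s ∈ S, {ω | f s ω = 1}) (fun _ => 1) ω := by
    intro ω
    by_cases h : ∀ s ∈ S, f s ω = 1
    · rw [Set.indicator_of_mem (by simpa [Set.mem_iInter] using h)]
      rw [Finset.prod_congr rfl (fun s hs => by rw [h s hs])]; simp
    · push_neg at h
      obtain ⟨s, hs, hne⟩ := h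
      rw [Set.indicator_of_notMem (by
        simp only [Set.mem_iInter, Set.mem_setOf_eq]
        push_neg
        exact ⟨s, hs, hne⟩)]
      refine Finset.prod_eq_zero hs ?_
      have h0 : f s ω = 0 := by have := hb s ω; omega
      simp [h0]
  rw [lintegral_congr hpt]
  have hmeasA : MeasurableSet (⋂ s ∈ S, {ω | f s ω = 1}) :=
    Finset.measurableSet_biInter _ fun s _ => hA s
  rw [show (fun (_ : Ω) => (1:ℝ≥0∞)) = (1 : Ω → ℝ≥0∞) from rfl,
    lintegral_indicator_one hmeasA]
  exact hind.meas_biInter (fun s _ => ⟨{1}, trivial, rfl⟩)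

lemma aux_exponent_ineq (κ γ δ α L : ℝ) (m : ℕ)
    (hκ0 : 0 < κ) (hd0 : 0 < Real.log (2-δ))
    (ht : Real.log α - Real.log γ ≤ -(2/κ + Real.log (2-δ)))
    (hL1 : 1 ≤ L) (hm0 : 1 ≤ (m:ℝ))
    (hm1 : κ * L ≤ (m:ℝ) + 2) (hm2 : (m:ℝ) + 1 ≤ κ * L)
    (hLbig : 2 * (2/κ + Real.log (2-δ)) ≤ (κ * Real.log (2-δ) / 2) * L) :
    m * L + m * Real.log α + κ * (L^2 - L * Real.log L) + (2*(m:ℝ)+1) * (Real.log L - L)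
      ≤ m * Real.log γ + m * Real.log L + (-(1 + κ * Real.log (2-δ)/2)) * L := by
  set t := Real.log α - Real.log γ with htdef
  set d := Real.log (2-δ) with hddef
  set lam := Real.log L with hlamdef
  have hlam0 : 0 ≤ lam := Real.log_nonneg hL1
  have hL0 : 0 < L := lt_of_lt_of_le one_pos hL1
  have hs0 : 0 < 2/κ + d := by positivity
  have ht0 : t ≤ 0 := le_trans ht (by linarith)
  have f1 : ((m:ℝ) - (κ*L - 2)) * (-t) ≥ 0 :=
    mul_nonneg (by linarith) (by linarith)
  have f2 : (κ*L - 2) * (t + (2/κ + d)) ≤ 0 :=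
    mul_nonpos_of_nonneg_of_nonpos (by linarith) (by linarith)
  have f3 : (κ*L - ((m:ℝ)+1)) * lam ≥ 0 :=
    mul_nonneg (by linarith) hlam0
  have f4 : (κ*L - ((m:ℝ)+1)) * L ≤ 1 * L :=
    mul_le_mul_of_nonneg_right (by linarith) (le_of_lt hL0)
  have hκs : κ * (2/κ + d) = 2 + κ * d := by field_simp
  nlinarith [f1, f2, f3, f4, hLbig, hκs]

/-- **Error bound for a zero coordinate in Amari's model with logarithmic interaction
order.**  Let `κ ∈ (0,1)`, `γ ∈ (0,1)`, `δ ∈ (γ,1)`, interaction order `n = κ log N`,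
threshold `h = γ^{n-1} (log N)^{n-1}`, `p = (log N)/N`, and
`M = α^{n-1} exp(κ((log N)² − log N log log N))` with `α > 0` so small that
`κ log((2−δ)α/γ) < −2`.  With `A_δ = {|∑_j ξ_j¹ − log N| ≤ (1−δ) log N}`, there exists
`c > 1` such that for all sufficiently large `N` and every coordinate `i`,
`P(T_i(ξ¹) ≠ ξ_i¹, ξ_i¹ = 0, A_δ) ≤ N^{−c}`. -/
theorem amari_log_order_zero_coordinate_error_bound
    (κ : ℝ) (hκ0 : 0 < κ) (hκ1 : κ < 1) (γ δ : ℝ) (hγ0 : 0 < γ) (hγ1 : γ < 1)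
    (hδγ : γ < δ) (hδ1 : δ < 1)
    (α : ℝ) (hα0 : 0 < α) (hα : κ * Real.log ((2 - δ) * α / γ) < -2)
    (n : ℕ → ℕ) (hn : ∀ N, n N = ⌊κ * Real.log N⌋₊)
    (Ω : ℕ → Type) [inst : ∀ N, MeasurableSpace (Ω N)]
    (P : ∀ N, Measure (Ω N)) (hP : ∀ N, IsProbabilityMeasure (P N))
    (M : ℕ → ℕ)
    (hMdef : ∀ N, M N = ⌊α ^ (n N - 1) *
      Real.exp (κ * (Real.log N ^ 2 - Real.log N * Real.log (Real.log N)))⌋₊)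
    (ξ : ∀ N : ℕ, Ω N → Fin (M N) → Fin N → ℕ)
    (hmeas : ∀ N μ i, Measurable fun ω => ξ N ω μ i)
    (h01 : ∀ N ω μ i, ξ N ω μ i ≤ 1)
    (hindep : ∀ N, iIndepFun (m := fun _ => ⊤)
      (fun p : Fin (M N) × Fin N => fun ω => ξ N ω p.1 p.2) (P N))
    (hber : ∀ N μ i, P N {ω | ξ N ω μ i = 1} = ENNReal.ofReal (Real.log N / N)) :
    ∃ c : ℝ, 1 < c ∧
      ∀ᶠ N : ℕ in atTop, ∀ h1 : 0 < M N, ∀ i : Fin N,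
        P N {ω |
            sparseT (n N) (hebbW (n N) (ξ N ω))
                (γ ^ (n N - 1) * Real.log N ^ (n N - 1)) (ξ N ω ⟨0, h1⟩) i
              ≠ ξ N ω ⟨0, h1⟩ i ∧
            ξ N ω ⟨0, h1⟩ i = 0 ∧
            |(∑ j, ξ N ω ⟨0, h1⟩ j : ℝ) - Real.log N| ≤ (1 - δ) * Real.log N}
          ≤ ENNReal.ofReal ((N : ℝ) ^ (-c)) := by
  have h2δ : (1:ℝ) < 2 - δ := by linarith
  have hd0 : 0 < Real.log (2 - δ) := Real.log_pos h2δ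
  set d := Real.log (2 - δ) with hddef
  refine ⟨1 + κ * d / 2, by nlinarith, ?_⟩
  set c := 1 + κ * d / 2 with hcdef
  -- transform the smallness assumption on α
  have htineq : Real.log α - Real.log γ ≤ -(2/κ + d) := by
    have hlogsplit : Real.log ((2-δ)*α/γ) = d + Real.log α - Real.log γ := by
      rw [Real.log_div (by positivity) (ne_of_gt hγ0),
        Real.log_mul (by positivity) (ne_of_gt hα0)]
    have hx : κ * (-2/κ) = -2 := by field_simp
    have h2 : Real.log ((2-δ)*α/γ) < -2/κ := by
      by_contra hcon
      push_neg at hcon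
      have := mul_le_mul_of_nonneg_left hcon (le_of_lt hκ0)
      rw [hx] at this
      linarith
    rw [hlogsplit] at h2
    have hneg : -2/κ = -(2/κ) := by ring
    rw [hneg] at h2
    linarith
  have hlog : Tendsto (fun N : ℕ => Real.log N) atTop atTop :=
    Real.tendsto_log_atTop.comp tendsto_natCast_atTop_atTop
  filter_upwards [hlog.eventually_ge_atTop 1,
    hlog.eventually_ge_atTop ((2 * (2/κ + d)) / (κ * d / 2)),
    hlog.eventually_ge_atTop (2/κ),
    eventually_gt_atTop 1] with N hL1 hLbig' hLκ hN2
  intro h1 i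
  classical
  set L := Real.log N with hLdef
  have hL0 : 0 < L := lt_of_lt_of_le one_pos hL1
  have hN0 : (0:ℝ) < N := by exact_mod_cast Nat.lt_of_lt_of_le Nat.zero_lt_one (le_of_lt hN2)
  have hκL2 : 2 ≤ κ * L := by
    have := (div_le_iff₀ hκ0).mp hLκ
    linarith
  have hLbig : 2 * (2/κ + d) ≤ (κ * d / 2) * L := by
    have := (div_le_iff₀ (by positivity)).mp hLbig'
    linarith
  have hn2 : 2 ≤ n N := by
    rw [hn]
    exact Nat.le_floor (by push_cast; linarith)
  set m := n N - 1 with hmdef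
  have hm1 : 1 ≤ m := by omega
  have hmcast : (m:ℝ) = (n N : ℝ) - 1 := by
    rw [hmdef, Nat.cast_sub (by omega)]
    simp
  have hνle : (n N : ℝ) ≤ κ * L := by
    rw [hn]
    exact Nat.floor_le (by positivity)
  have hνge : κ * L ≤ (n N : ℝ) + 1 := by
    rw [hn]
    exact le_of_lt (Nat.lt_floor_add_one _)
  set p : ℝ := L / N with hpdef
  have hp0' : 0 < p := div_pos hL0 hN0
  have hp0 : 0 ≤ p := le_of_lt hp0'
  set ν0 : Fin (M N) := ⟨0, h1⟩ with hν0def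
  set hthr : ℝ := γ ^ m * L ^ m with hthrdef
  have hthr0 : 0 < hthr := by positivity
  set fld : Ω N → ℕ := fun ω => sparseField (n N) (hebbW (n N) (ξ N ω)) (ξ N ω ν0) i
    with hflddef
  set ind : Ω N → ℝ≥0∞ := fun ω => if ξ N ω ν0 i = 0 then 1 else 0 with hinddef
  set X : Ω N → ℝ≥0∞ := fun ω => ind ω * (fld ω : ℝ≥0∞) with hXdef
  -- measurability helper
  have hcomp : ∀ (G : (Fin (M N) → Fin N → ℕ) → ℝ≥0∞),
      Measurable fun ω => G (fun μ j => ξ N ω μ j) := by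
    intro G
    have hmble : Measurable fun ω => (fun μ j => ξ N ω μ j) :=
      measurable_pi_lambda _ fun μ => measurable_pi_lambda _ fun j => hmeas N μ j
    exact (measurable_of_countable G).comp hmble
  have hXmeas : Measurable X :=
    hcomp (fun v => (if v ν0 i = 0 then 1 else 0) *
      (sparseField (n N) (hebbW (n N) v) (v ν0) i : ℝ≥0∞))
  -- the event is contained in {ofReal hthr ≤ X}
  have hsub : {ω |
        sparseT (n N) (hebbW (n N) (ξ N ω)) (γ ^ (n N - 1) * Real.log N ^ (n N - 1))
            (ξ N ω ⟨0, h1⟩) i ≠ ξ N ω ⟨0, h1⟩ i ∧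
        ξ N ω ⟨0, h1⟩ i = 0 ∧
        |(∑ j, ξ N ω ⟨0, h1⟩ j : ℝ) - Real.log N| ≤ (1 - δ) * Real.log N}
      ⊆ {ω | ENNReal.ofReal hthr ≤ X ω} := by
    rintro ω ⟨hne, hz, -⟩
    have hfld : hthr < (fld ω : ℝ) := by
      by_contra hc
      push_neg at hc
      apply hne
      rw [hz]
      show hstep ((fld ω : ℝ) - hthr) = 0
      simp only [hstep]
      rw [if_neg (not_lt.mpr (by linarith))]
    simp only [Set.mem_setOf_eq]
    have hXω : X ω = (fld ω : ℝ≥0∞) := by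
      simp [hXdef, hinddef, hz, show ξ N ω ν0 i = 0 from hz]
    rw [hXω]
    calc ENNReal.ofReal hthr ≤ ENNReal.ofReal ((fld ω : ℕ) : ℝ) :=
          ENNReal.ofReal_le_ofReal (le_of_lt hfld)
      _ = ((fld ω : ℕ) : ℝ≥0∞) := ENNReal.ofReal_natCast _
  -- decomposition of X
  set J : Finset (Fin (n N - 1) → Fin N) :=
    Finset.filter (fun js => Function.Injective js) Finset.univ with hJdef
  set g : (Fin (n N - 1) → Fin N) → Fin (M N) → Ω N → ℝ≥0∞ :=
    fun js μ ω => ind ω * ((∏ k, (ξ N ω ν0 (js k) : ℝ≥0∞)) *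
      ((ξ N ω μ i : ℝ≥0∞) * ∏ k, (ξ N ω μ (js k) : ℝ≥0∞))) with hgdef
  have hXeq : ∀ ω, X ω = ∑ js ∈ J, ∑ μ : Fin (M N), g js μ ω := by
    intro ω
    simp only [hXdef, hflddef, sparseField, hebbW, hgdef, hJdef,
      Finset.filter_congr_decidable]
    push_cast
    rw [Finset.mul_sum]
    refine Finset.sum_congr rfl fun js hjs => ?_
    rw [Finset.mul_sum, Finset.mul_sum]
  set q : ℝ≥0∞ := ENNReal.ofReal p ^ (2*m+1) with hqdef
  set f : Fin (M N) × Fin N → Ω N → ℕ := fun s ω => ξ N ω s.1 s.2 with hfdef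
  -- per-term bound
  have hterm : ∀ js ∈ J, ∀ μ : Fin (M N), (∫⁻ ω, g js μ ω ∂ P N) ≤ q := by
    intro js hjs μ
    have hjsinj : Function.Injective js := (Finset.mem_filter.mp hjs).2
    by_cases hμ : μ = ν0
    · have hzero : ∀ ω, g js μ ω = 0 := by
        intro ω
        by_cases hz : ξ N ω ν0 i = 0
        · simp [hgdef, hμ, hz]
        · simp [hgdef, hinddef, hz]
      simp only [hzero]
      simp
    by_cases hi' : ∃ k, js k = i
    · obtain ⟨k0, hk0⟩ := hi'
      have hzero : ∀ ω, g js μ ω = 0 := by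
        intro ω
        by_cases hz : ξ N ω ν0 i = 0
        · have hv : (ξ N ω ν0 (js k0) : ℝ≥0∞) = 0 := by rw [hk0, hz]; simp
          have : (∏ k, (ξ N ω ν0 (js k) : ℝ≥0∞)) = 0 :=
            Finset.prod_eq_zero (Finset.mem_univ k0) hv
          simp [hgdef, this]
        · simp [hgdef, hinddef, hz]
      simp only [hzero]
      simp
    · push_neg at hi'
      set S1 : Finset (Fin (M N) × Fin N) :=
        Finset.image (fun k => (ν0, js k)) Finset.univ with hS1def
      set S2 : Finset (Fin (M N) × Fin N) :=
        Finset.image (fun k => (μ, js k)) Finset.univ with hS2def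
      have hinj1 : Function.Injective (fun k : Fin (n N - 1) => ((ν0, js k) : Fin (M N) × Fin N)) := by
        intro a b hab
        exact hjsinj (congrArg Prod.snd hab)
      have hinj2 : Function.Injective (fun k : Fin (n N - 1) => ((μ, js k) : Fin (M N) × Fin N)) := by
        intro a b hab
        exact hjsinj (congrArg Prod.snd hab)
      have hd12 : Disjoint S1 S2 := by
        rw [Finset.disjoint_left]
        rintro ⟨a, b⟩ hmem1 hmem2
        simp only [hS1def, hS2def, Finset.mem_image, Finset.mem_univ, true_and] at hmem1 hmem2
        obtain ⟨k1, hk1⟩ := hmem1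
        obtain ⟨k2, hk2⟩ := hmem2
        have e2 : a = μ := by
          have := congrArg Prod.fst hk2
          simpa using this.symm
        have e1' : a = ν0 := by
          have := congrArg Prod.fst hk1
          simpa using this.symm
        exact hμ (e2 ▸ e1')
      have hnm : ((μ, i) : Fin (M N) × Fin N) ∉ S1 ∪ S2 := by
        intro hmem
        rcases Finset.mem_union.mp hmem with hmem | hmem
        · simp only [hS1def, Finset.mem_image, Finset.mem_univ, true_and] at hmem
          obtain ⟨k1, hk1⟩ := hmem
          exact hμ (by simpa using (congrArg Prod.fst hk1).symm)
        · simp only [hS2def, Finset.mem_image, Finset.mem_univ, true_and] at hmem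
          obtain ⟨k1, hk1⟩ := hmem
          exact hi' k1 (by simpa using congrArg Prod.snd hk1)
      set S : Finset (Fin (M N) × Fin N) := insert (μ, i) (S1 ∪ S2) with hSdef
      have hptle : ∀ ω, g js μ ω ≤ ∏ s ∈ S, (f s ω : ℝ≥0∞) := by
        intro ω
        rw [hSdef, Finset.prod_insert hnm, Finset.prod_union hd12, hS1def, hS2def,
          Finset.prod_image (fun a _ b _ hab => hinj1 hab),
          Finset.prod_image (fun a _ b _ hab => hinj2 hab)]
        have hind1 : ind ω ≤ 1 := by
          by_cases hz : ξ N ω ν0 i = 0 <;> simp [hinddef, hz]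
        calc g js μ ω ≤ 1 * ((∏ k, (ξ N ω ν0 (js k) : ℝ≥0∞)) *
              ((ξ N ω μ i : ℝ≥0∞) * ∏ k, (ξ N ω μ (js k) : ℝ≥0∞))) := by
              rw [hgdef]
              exact mul_le_mul_left hind1 _
          _ = (f (μ, i) ω : ℝ≥0∞) * ((∏ k, (f (ν0, js k) ω : ℝ≥0∞)) *
              ∏ k, (f (μ, js k) ω : ℝ≥0∞)) := by
              rw [hfdef]
              ring
      have hcardS : S.card = 2*m+1 := by
        rw [hSdef, Finset.card_insert_of_notMem hnm, Finset.card_union_of_disjoint hd12,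
          hS1def, hS2def, Finset.card_image_of_injective _ hinj1,
          Finset.card_image_of_injective _ hinj2, Finset.card_univ, Fintype.card_fin]
        rw [hmdef]
        omega
      calc (∫⁻ ω, g js μ ω ∂ P N) ≤ ∫⁻ ω, ∏ s ∈ S, (f s ω : ℝ≥0∞) ∂ P N :=
            lintegral_mono hptle
        _ = ∏ s ∈ S, P N {ω | f s ω = 1} :=
            aux_lintegral_prod (P N) f (fun s => hmeas N s.1 s.2)
              (fun s ω => h01 N ω s.1 s.2) (hindep N) S
        _ = ∏ s ∈ S, ENNReal.ofReal p := Finset.prod_congr rfl fun s _ => hber N s.1 s.2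
        _ = ENNReal.ofReal p ^ S.card := Finset.prod_const _
        _ = q := by rw [hcardS, hqdef]
  -- summing up
  have hXint : (∫⁻ ω, X ω ∂ P N) ≤ (J.card * M N : ℕ) * q := by
    have hgmeas : ∀ js μ, Measurable (g js μ) := by
      intro js μ
      exact hcomp (fun v => (if v ν0 i = 0 then 1 else 0) *
        ((∏ k, (v ν0 (js k) : ℝ≥0∞)) *
          ((v μ i : ℝ≥0∞) * ∏ k, (v μ (js k) : ℝ≥0∞))))
    calc (∫⁻ ω, X ω ∂ P N)
        = ∫⁻ ω, ∑ js ∈ J, ∑ μ : Fin (M N), g js μ ω ∂ P N := lintegral_congr hXeq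
      _ = ∑ js ∈ J, ∫⁻ ω, ∑ μ : Fin (M N), g js μ ω ∂ P N :=
          lintegral_finset_sum _ (fun js _ => Finset.measurable_sum _ fun μ _ => hgmeas js μ)
      _ = ∑ js ∈ J, ∑ μ : Fin (M N), ∫⁻ ω, g js μ ω ∂ P N :=
          Finset.sum_congr rfl fun js _ => lintegral_finset_sum _ (fun μ _ => hgmeas js μ)
      _ ≤ ∑ js ∈ J, ∑ _μ : Fin (M N), q :=
          Finset.sum_le_sum fun js hjs => Finset.sum_le_sum fun μ _ => hterm js hjs μ
      _ = (J.card * M N : ℕ) * q := by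
          simp [Finset.sum_const, mul_assoc]
  have hcard : J.card * M N ≤ N ^ m * M N := by
    refine Nat.mul_le_mul_right _ ?_
    calc J.card ≤ (Finset.univ : Finset (Fin (n N - 1) → Fin N)).card :=
          Finset.card_filter_le _ _
      _ = N ^ m := by
          rw [Finset.card_univ, Fintype.card_fun, Fintype.card_fin, Fintype.card_fin, hmdef]
  -- the real-valued estimate
  have hpowexp : ∀ x : ℝ, 0 < x → ∀ k : ℕ, x ^ k = Real.exp (k * Real.log x) := by
    intro x hx k
    rw [← Real.rpow_natCast x k, Real.rpow_def_of_pos hx, mul_comm]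
  have hMle : (M N : ℝ) ≤ α ^ m * Real.exp (κ * (L^2 - L * Real.log L)) := by
    rw [hMdef N]
    exact Nat.floor_le (by positivity)
  have hlogp : Real.log p = Real.log L - L := by
    rw [hpdef, Real.log_div (ne_of_gt hL0) (ne_of_gt hN0)]
  have hreal : ((N:ℝ) ^ m * M N) * p ^ (2*m+1) ≤ hthr * (N:ℝ) ^ (-c) := by
    have hm0R : 1 ≤ (m:ℝ) := by exact_mod_cast hm1
    have hm1R : κ * L ≤ (m:ℝ) + 2 := by rw [hmcast]; linarith
    have hm2R : (m:ℝ) + 1 ≤ κ * L := by rw [hmcast]; linarith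
    have hexp := aux_exponent_ineq κ γ δ α L m hκ0 hd0 htineq hL1 hm0R hm1R hm2R hLbig
    calc ((N:ℝ) ^ m * M N) * p ^ (2*m+1)
        ≤ (Real.exp (m * L) * (α ^ m * Real.exp (κ * (L^2 - L * Real.log L)))) *
            Real.exp ((2*(m:ℝ)+1) * (Real.log L - L)) := by
          rw [hpowexp _ hN0 m, hpowexp _ hp0' (2*m+1), hlogp]
          have hc1 : ((2*m+1 : ℕ) : ℝ) = 2*(m:ℝ)+1 := by push_cast; ring
          rw [hc1]
          exact mul_le_mul_of_nonneg_right
            (mul_le_mul_of_nonneg_left hMle (by positivity)) (by positivity)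
      _ = Real.exp ((m:ℝ) * L + ((m:ℝ) * Real.log α + κ * (L^2 - L * Real.log L)) +
            (2*(m:ℝ)+1) * (Real.log L - L)) := by
          rw [hpowexp _ hα0 m, ← Real.exp_add, ← Real.exp_add, ← Real.exp_add]
      _ ≤ Real.exp ((m:ℝ) * Real.log γ + (m:ℝ) * Real.log L + (-c) * L) := by
          rw [Real.exp_le_exp, hcdef]
          linarith
      _ = hthr * (N:ℝ) ^ (-c) := by
          rw [Real.exp_add, Real.exp_add, hthrdef, hpowexp _ hγ0 m, hpowexp _ hL0 m,
            Real.rpow_def_of_pos hN0, mul_comm (Real.log (N:ℝ)) (-c)]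
  -- put everything together in ℝ≥0∞
  have hq : ((N ^ m * M N : ℕ) : ℝ≥0∞) * q = ENNReal.ofReal (((N:ℝ) ^ m * M N) * p ^ (2*m+1)) := by
    rw [ENNReal.ofReal_mul (by positivity), ENNReal.ofReal_pow hp0, hqdef]
    congr 1
    rw [← ENNReal.ofReal_natCast (N ^ m * M N)]
    congr 1
    push_cast
    ring
  have hfinal : (∫⁻ ω, X ω ∂ P N) ≤ ENNReal.ofReal hthr * ENNReal.ofReal ((N:ℝ) ^ (-c)) := by
    calc (∫⁻ ω, X ω ∂ P N) ≤ (J.card * M N : ℕ) * q := hXint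
      _ ≤ ((N ^ m * M N : ℕ) : ℝ≥0∞) * q := by
          exact mul_le_mul_left (by exact_mod_cast hcard) _
      _ = ENNReal.ofReal (((N:ℝ) ^ m * M N) * p ^ (2*m+1)) := hq
      _ ≤ ENNReal.ofReal (hthr * (N:ℝ) ^ (-c)) := ENNReal.ofReal_le_ofReal hreal
      _ = ENNReal.ofReal hthr * ENNReal.ofReal ((N:ℝ) ^ (-c)) :=
          ENNReal.ofReal_mul (le_of_lt hthr0)
  have hmarkov := mul_meas_ge_le_lintegral₀ (μ := P N) hXmeas.aemeasurable (ENNReal.ofReal hthr)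
  have hchain : ENNReal.ofReal hthr *
      P N {ω |
        sparseT (n N) (hebbW (n N) (ξ N ω)) hthr (ξ N ω ν0) i ≠ ξ N ω ν0 i ∧
        ξ N ω ν0 i = 0 ∧
        |(∑ j, ξ N ω ν0 j : ℝ) - L| ≤ (1 - δ) * L}
      ≤ ENNReal.ofReal hthr * ENNReal.ofReal ((N:ℝ) ^ (-c)) := by
    refine le_trans (mul_le_mul_right (measure_mono hsub) _) (le_trans hmarkov hfinal)
  exact (ENNReal.mul_le_mul_iff_right (ne_of_gt (ENNReal.ofReal_pos.mpr hthr0))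
    ENNReal.ofReal_ne_top).mp hchain

end
end

section
/- Let κ > 0, let c = c(l) be a sequence with c ~ log l, let n = n(l) = κ c (assumed integer) and λ = λ(l) = (l−1)/c (assumed integer). Then C(λ, n−1) · c^{n−1} / C(l−1, n−1) → 1 as l → ∞. -/
open Filter Finset

lemma choose_ratio_eq_prod (a b k cc : ℕ) :
    ((a.choose k : ℝ) * (cc : ℝ) ^ k) / (b.choose k : ℝ)
      = ∏ i ∈ Finset.range k, (((a - i : ℕ) : ℝ) * (cc : ℝ)) / ((b - i : ℕ) : ℝ) := by
  have hk : ((Nat.factorial k : ℕ) : ℝ) ≠ 0 := by exact_mod_cast k.factorial_ne_zero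
  rw [Finset.prod_div_distrib, Finset.prod_mul_distrib, Finset.prod_const,
    ← Nat.cast_prod, ← Nat.cast_prod,
    ← Nat.descFactorial_eq_prod_range, ← Nat.descFactorial_eq_prod_range,
    Nat.descFactorial_eq_factorial_mul_choose, Nat.descFactorial_eq_factorial_mul_choose,
    Finset.card_range]
  push_cast
  rw [mul_assoc, mul_div_mul_left _ _ hk]

lemma gb_aux (cc k l : ℕ) (hc0 : 0 < cc) (hl2 : 2 ≤ l)
    (D : ℝ) (hD0 : 0 ≤ D) (hD1 : D ≤ 1)
    (hkc : (k + 1) * cc ≤ l - 1)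
    (hden : (l : ℝ) / 2 ≤ (l : ℝ) - 1 - k)
    (hDdef : ((k : ℝ) + 1) * cc / ((l : ℝ) / 2) ≤ D) :
    (1 - D) ^ k ≤ (((l - 1) / cc).choose k : ℝ) * (cc : ℝ) ^ k / ((l - 1).choose k : ℝ)
      ∧ (((l - 1) / cc).choose k : ℝ) * (cc : ℝ) ^ k / ((l - 1).choose k : ℝ) ≤ 1 := by
  set a := (l - 1) / cc with ha
  have hl0 : (0:ℝ) < l := by
    have : (2:ℝ) ≤ l := by exact_mod_cast hl2
    linarith
  have hka : k + 1 ≤ a := (Nat.le_div_iff_mul_le hc0).mpr hkc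
  have hab : a ≤ l - 1 := Nat.div_le_self _ _
  have hacb : a * cc ≤ l - 1 := Nat.div_mul_le_self _ _
  have hlac : l ≤ cc * a + cc := by
    have h1 := Nat.div_add_mod (l - 1) cc
    rw [← ha] at h1
    have h2 : (l - 1) % cc < cc := Nat.mod_lt _ hc0
    have h3 : l - 1 + 1 ≤ cc * a + cc := by
      calc l - 1 + 1 = cc * a + (l - 1) % cc + 1 := by rw [h1]
        _ ≤ cc * a + cc := by omega
    rwa [Nat.sub_add_cancel (by omega : 1 ≤ l)] at h3
  have hbcast : ((l - 1 : ℕ) : ℝ) = (l : ℝ) - 1 := by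
    rw [Nat.cast_sub (by omega : 1 ≤ l), Nat.cast_one]
  have hC0 : (0:ℝ) < (cc : ℝ) := by exact_mod_cast hc0
  have hC1 : (1:ℝ) ≤ (cc : ℝ) := by exact_mod_cast hc0
  have haC : (l:ℝ) ≤ (cc : ℝ) * a + cc := by exact_mod_cast hlac
  have hacbR : (a:ℝ) * cc ≤ (l:ℝ) - 1 := by
    rw [← hbcast]; exact_mod_cast hacb
  rw [choose_ratio_eq_prod]
  have hlb : ∀ i ∈ Finset.range k,
      1 - D ≤ (((a - i : ℕ) : ℝ) * cc) / (((l - 1) - i : ℕ) : ℝ) := by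
    intro i hi
    have hik : i < k := Finset.mem_range.mp hi
    have hcast1 : ((a - i : ℕ) : ℝ) = (a:ℝ) - i := by
      rw [Nat.cast_sub (by omega : i ≤ a)]
    have hcast2 : (((l - 1) - i : ℕ) : ℝ) = (l:ℝ) - 1 - i := by
      rw [Nat.cast_sub (by omega : i ≤ l - 1), hbcast]
    have hiK : (i:ℝ) + 1 ≤ (k:ℝ) := by exact_mod_cast hik
    have hdenge : (l:ℝ)/2 ≤ (l:ℝ) - 1 - i := by linarith
    have hdenpos : (0:ℝ) < (l:ℝ) - 1 - i := by linarith
    rw [hcast1, hcast2, le_div_iff₀ hdenpos]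
    have hD_half : ((k:ℝ) + 1) * cc ≤ D * ((l:ℝ)/2) := by
      rw [div_le_iff₀ (by linarith : (0:ℝ) < (l:ℝ)/2)] at hDdef
      linarith
    nlinarith [mul_le_mul_of_nonneg_left hdenge hD0,
      mul_nonneg (by linarith : (0:ℝ) ≤ (k:ℝ) - i) hC0.le]
  have hub : ∀ i ∈ Finset.range k,
      (((a - i : ℕ) : ℝ) * cc) / (((l - 1) - i : ℕ) : ℝ) ≤ 1 := by
    intro i hi
    have hik : i < k := Finset.mem_range.mp hi
    have hcast1 : ((a - i : ℕ) : ℝ) = (a:ℝ) - i := by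
      rw [Nat.cast_sub (by omega : i ≤ a)]
    have hcast2 : (((l - 1) - i : ℕ) : ℝ) = (l:ℝ) - 1 - i := by
      rw [Nat.cast_sub (by omega : i ≤ l - 1), hbcast]
    have hiK : (i:ℝ) + 1 ≤ (k:ℝ) := by exact_mod_cast hik
    have hdenpos : (0:ℝ) < (l:ℝ) - 1 - i := by
      have : (l:ℝ)/2 ≤ (l:ℝ) - 1 - i := by linarith
      linarith
    rw [hcast1, hcast2, div_le_one hdenpos]
    have hi0 : (0:ℝ) ≤ i := Nat.cast_nonneg i
    nlinarith [mul_nonneg hi0 (by linarith : (0:ℝ) ≤ (cc:ℝ) - 1)]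
  constructor
  · have h := Finset.prod_le_prod (s := Finset.range k) (f := fun _ => 1 - D)
      (fun i _ => by simpa using (show (0:ℝ) ≤ 1 - D by linarith)) hlb
    simpa using h
  · exact Finset.prod_le_one
      (fun i hi => le_trans (by linarith : (0:ℝ) ≤ 1 - D) (hlb i hi)) hub

set_option maxHeartbeats 1000000 in
/-- **Binomial asymptotics in the GB model with logarithmic interaction order.**
Let `κ > 0`, let `c = c(l) ~ log l`, `n = n(l) = κ c` and `λ = λ(l) = (l−1)/c` (both
taken as integers).  Then `C(λ, n−1) c^{n−1} / C(l−1, n−1) → 1` as `l → ∞`. -/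
theorem gb_binomial_ratio_tendsto_one
    (κ : ℝ) (hκ : 0 < κ) (c : ℕ → ℕ)
    (hc : Tendsto (fun l => (c l : ℝ) / Real.log l) atTop (nhds 1)) :
    Tendsto
      (fun l : ℕ =>
        ((((l - 1) / c l).choose (⌊κ * (c l : ℝ)⌋₊ - 1) : ℝ)
            * (c l : ℝ) ^ (⌊κ * (c l : ℝ)⌋₊ - 1))
          / ((l - 1).choose (⌊κ * (c l : ℝ)⌋₊ - 1) : ℝ))
      atTop (nhds 1) := by
  have hlogTop : Tendsto (fun l : ℕ => Real.log l) atTop atTop :=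
    Real.tendsto_log_atTop.comp tendsto_natCast_atTop_atTop
  have hT2 : Tendsto (fun l : ℕ => (Real.log l) ^ 2 / (l : ℝ)) atTop (nhds 0) := by
    have := (Real.tendsto_pow_log_div_mul_add_atTop 1 0 2 one_ne_zero).comp
      (tendsto_natCast_atTop_atTop (R := ℝ))
    simpa [Function.comp_def] using this
  have hT1 : Tendsto (fun l : ℕ => Real.log l / (l : ℝ)) atTop (nhds 0) := by
    have := (Real.tendsto_pow_log_div_mul_add_atTop 1 0 1 one_ne_zero).comp
      (tendsto_natCast_atTop_atTop (R := ℝ))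
    simpa [Function.comp_def] using this
  have hT3 : Tendsto (fun l : ℕ => (Real.log l) ^ 3 / (l : ℝ)) atTop (nhds 0) := by
    have := (Real.tendsto_pow_log_div_mul_add_atTop 1 0 3 one_ne_zero).comp
      (tendsto_natCast_atTop_atTop (R := ℝ))
    simpa [Function.comp_def] using this
  have hcb : ∀ᶠ l : ℕ in atTop,
      (c l : ℝ) ≤ 2 * Real.log l ∧ Real.log l ≤ 2 * (c l : ℝ) := by
    have h1 : ∀ᶠ l : ℕ in atTop, (c l : ℝ) / Real.log l ∈ Set.Ioo (1/2 : ℝ) 2 :=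
      hc (Ioo_mem_nhds (by norm_num) (by norm_num))
    filter_upwards [h1, hlogTop.eventually_ge_atTop 1] with l h1 hL
    obtain ⟨ha, hb⟩ := h1
    have hL0 : (0:ℝ) < Real.log l := by linarith
    constructor
    · nlinarith [(div_lt_iff₀ hL0).mp hb]
    · nlinarith [(lt_div_iff₀ hL0).mp ha]
  have hc2 : ∀ᶠ l : ℕ in atTop, 2 ≤ c l := by
    filter_upwards [hcb, hlogTop.eventually_ge_atTop 4] with l hcb hL
    have : (2:ℝ) ≤ (c l : ℝ) := by linarith [hcb.2]
    exact_mod_cast this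
  have hP1 : ∀ᶠ l : ℕ in atTop, (κ + 1) * (Real.log l) ^ 2 ≤ (l : ℝ) / 8 := by
    have hε : (0:ℝ) < 1 / (8 * (κ + 1)) := by positivity
    filter_upwards [hT2.eventually (gt_mem_nhds hε), eventually_ge_atTop 1] with l h hl
    have hl0 : (0:ℝ) < l := by exact_mod_cast hl
    have := (div_lt_iff₀ hl0).mp h
    have hκ1 : (0:ℝ) < κ + 1 := by linarith
    rw [div_mul_eq_mul_div, lt_div_iff₀ (by positivity : (0:ℝ) < 8 * (κ+1))] at this
    nlinarith
  have hP2 : ∀ᶠ l : ℕ in atTop, 2 * (κ + 1) * Real.log l + 1 ≤ (l : ℝ) / 2 := by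
    have hε : (0:ℝ) < 1 / (8 * (κ + 1)) := by positivity
    filter_upwards [hT1.eventually (gt_mem_nhds hε), eventually_ge_atTop 4,
      hlogTop.eventually_ge_atTop 1] with l h hl hL
    have h4 : (4:ℝ) ≤ l := by exact_mod_cast hl
    have hl0 : (0:ℝ) < l := by linarith
    have := (div_lt_iff₀ hl0).mp h
    have hκ1 : (0:ℝ) < κ + 1 := by linarith
    rw [div_mul_eq_mul_div, lt_div_iff₀ (by positivity : (0:ℝ) < 8 * (κ+1))] at this
    nlinarith
  have key : ∀ᶠ l : ℕ in atTop,
      1 - 16 * (κ + 1) ^ 2 * (Real.log l) ^ 3 / (l : ℝ) ≤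
        ((((l - 1) / c l).choose (⌊κ * (c l : ℝ)⌋₊ - 1) : ℝ)
            * (c l : ℝ) ^ (⌊κ * (c l : ℝ)⌋₊ - 1))
          / ((l - 1).choose (⌊κ * (c l : ℝ)⌋₊ - 1) : ℝ) ∧
        ((((l - 1) / c l).choose (⌊κ * (c l : ℝ)⌋₊ - 1) : ℝ)
            * (c l : ℝ) ^ (⌊κ * (c l : ℝ)⌋₊ - 1))
          / ((l - 1).choose (⌊κ * (c l : ℝ)⌋₊ - 1) : ℝ) ≤ 1 := by
    filter_upwards [hcb, hc2, hP1, hP2, eventually_ge_atTop 5,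
      hlogTop.eventually_ge_atTop 1] with l hcb hc2 hP1 hP2 hl5 hL1
    have hc0 : 0 < c l := by omega
    have hC2 : (2:ℝ) ≤ (c l : ℝ) := by exact_mod_cast hc2
    have hl5R : (5:ℝ) ≤ (l:ℝ) := by exact_mod_cast hl5
    have hl0 : (0:ℝ) < l := by linarith
    have hL0 : (0:ℝ) < Real.log l := by linarith
    have hC0 : (0:ℝ) < (c l : ℝ) := by linarith
    obtain ⟨hCL, hLC⟩ := hcb
    set K : ℕ := ⌊κ * (c l : ℝ)⌋₊ - 1 with hK
    have hM : (K:ℝ) ≤ κ * (c l : ℝ) := by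
      calc (K:ℝ) ≤ (⌊κ * (c l : ℝ)⌋₊ : ℝ) := by exact_mod_cast Nat.sub_le _ 1
        _ ≤ κ * (c l : ℝ) := Nat.floor_le (by positivity)
    have hM1 : (K:ℝ) + 1 ≤ (κ + 1) * (c l : ℝ) := by nlinarith
    have hM2L : (K:ℝ) + 1 ≤ 2 * (κ + 1) * Real.log l := by nlinarith
    have hbcast : ((l - 1 : ℕ) : ℝ) = (l:ℝ) - 1 := by
      rw [Nat.cast_sub (by omega : 1 ≤ l), Nat.cast_one]
    have hkc : (K + 1) * c l ≤ l - 1 := by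
      have s1 : ((K:ℝ)+1) * (c l:ℝ) ≤ (κ+1) * (c l:ℝ) * (c l:ℝ) :=
        mul_le_mul_of_nonneg_right hM1 hC0.le
      have s2 : (κ+1) * (c l:ℝ) * (c l:ℝ) ≤ (κ+1) * (2*Real.log l) * (2*Real.log l) := by
        nlinarith
      have hr : ((K:ℝ)+1) * (c l:ℝ) ≤ (l:ℝ) - 1 := by nlinarith
      have : (((K+1) * c l : ℕ) : ℝ) ≤ ((l - 1 : ℕ) : ℝ) := by
        rw [hbcast]; push_cast; linarith
      exact_mod_cast this
    set D : ℝ := 2 * ((K:ℝ) + 1) * (c l : ℝ) / (l : ℝ) with hD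
    have hD0 : 0 ≤ D := by positivity
    have hDu : D ≤ 8 * (κ+1) * (Real.log l)^2 / (l:ℝ) := by
      rw [hD]
      refine div_le_div_of_nonneg_right ?_ hl0.le
      have u1 : ((K:ℝ)+1)*(c l:ℝ) ≤ (κ+1)*(c l:ℝ)*(c l:ℝ) :=
        mul_le_mul_of_nonneg_right hM1 hC0.le
      have u2 : (c l:ℝ)*(c l:ℝ) ≤ (2*Real.log l)*(2*Real.log l) :=
        mul_le_mul hCL hCL hC0.le (by positivity)
      have u3 : (κ+1)*((c l:ℝ)*(c l:ℝ)) ≤ (κ+1)*((2*Real.log l)*(2*Real.log l)) :=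
        mul_le_mul_of_nonneg_left u2 (by linarith)
      nlinarith [u1, u3]
    have hD1 : D ≤ 1 := by
      have h8 : 8 * (κ+1) * (Real.log l)^2 / (l:ℝ) ≤ 1 := by
        rw [div_le_one hl0]; nlinarith
      linarith
    have hden : (l:ℝ)/2 ≤ (l:ℝ) - 1 - K := by linarith
    have hDdef : ((K:ℝ)+1) * (c l : ℝ) / ((l:ℝ)/2) ≤ D := by
      rw [hD, div_div_eq_mul_div]
      exact le_of_eq (by ring)
    obtain ⟨hlow, hup⟩ := gb_aux (c l) K l hc0 (by omega) D hD0 hD1 hkc hden hDdef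
    refine ⟨?_, hup⟩
    have hbern : 1 - (K:ℝ) * D ≤ (1 - D)^K := by
      have h := one_add_mul_le_pow (by linarith : (-2:ℝ) ≤ -D) K
      have e : (1 + -D) = 1 - D := by ring
      rw [e] at h
      linarith [h]
    have hKD : (K:ℝ) * D ≤ 16 * (κ+1)^2 * (Real.log l)^3 / (l:ℝ) := by
      rw [hD, ← mul_div_assoc]
      refine div_le_div_of_nonneg_right ?_ hl0.le
      have s2 : ((K:ℝ)+1) * (c l:ℝ) ≤ (2*(κ+1)*Real.log l) * (2*Real.log l) :=
        mul_le_mul hM2L hCL hC0.le (by positivity)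
      have w1 : (K:ℝ) * (((K:ℝ)+1)*(c l:ℝ)) ≤ (2*(κ+1)*Real.log l) * (((K:ℝ)+1)*(c l:ℝ)) :=
        mul_le_mul_of_nonneg_right (by linarith [hM2L]) (by positivity)
      have w2 : (2*(κ+1)*Real.log l) * (((K:ℝ)+1)*(c l:ℝ)) ≤
          (2*(κ+1)*Real.log l) * ((2*(κ+1)*Real.log l) * (2*Real.log l)) :=
        mul_le_mul_of_nonneg_left s2 (by positivity)
      nlinarith [w1, w2]
    linarith
  refine tendsto_of_tendsto_of_tendsto_of_le_of_le' ?_ tendsto_const_nhds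
    (key.mono fun l h => h.1) (key.mono fun l h => h.2)
  have h0 : Tendsto (fun l : ℕ => 16 * (κ + 1) ^ 2 * ((Real.log l) ^ 3 / (l : ℝ)))
      atTop (nhds (16 * (κ + 1) ^ 2 * 0)) := hT3.const_mul _
  have h1 := (tendsto_const_nhds (x := (1:ℝ)) (f := atTop (α := ℕ))).sub h0
  simpa [mul_div_assoc] using h1
end
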